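/- arXiv:1408.2334 — 4 statements merged into one kernel-verified Lean document; each statement's English description precedes it below -/
import Mathlib

section
/- Let α > 1/2 be a real number, let N be a finite set of positive integers, and let c : N → ℂ. Then Σ_{n=1}^{∞} | Σ_{k ∈ N, k ∣ n} c(k) · k^{α}/n^{α} |^2 = ζ(2α) · Σ_{m, n ∈ N} c(m) · conj(c(n)) · gcd(m,n)^{2α}/(m n)^{α}, where both sides converge. -/
open Real Finset

lemma tsum_multiples (L : ℕ) (hL : 0 < L) (s : ℝ) (hs : 1 < s) :
    Summable (fun n : ℕ => if L ∣ n then 1 / (n:ℝ)^s else 0) ∧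
    ∑' n : ℕ, (if L ∣ n then 1 / (n:ℝ)^s else 0)
      = (1/(L:ℝ)^s) * ∑' m : ℕ, 1/(m:ℝ)^s := by
  set f : ℕ → ℝ := fun n => if L ∣ n then 1 / (n:ℝ)^s else 0 with hf
  have hg : Function.Injective (fun m : ℕ => L * m) := fun a b h =>
    Nat.eq_of_mul_eq_mul_left hL h
  have hsupp' : ∀ x ∉ Set.range (fun m : ℕ => L * m), f x = 0 := by
    intro x hx
    have : ¬ L ∣ x := by
      intro ⟨m, hm⟩; exact hx ⟨m, hm.symm⟩
    simp [hf, this]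
  have hsupp : Function.support f ⊆ Set.range (fun m : ℕ => L * m) := by
    intro x hx
    by_contra hc
    exact hx (hsupp' x hc)
  have hcomp : (f ∘ fun m : ℕ => L * m) = fun m : ℕ => (1/(L:ℝ)^s) * (1/(m:ℝ)^s) := by
    funext m
    simp only [Function.comp, hf, if_pos (Dvd.intro m rfl)]
    rw [Nat.cast_mul, Real.mul_rpow (by positivity) (by positivity)]
    ring
  have hS : Summable (fun m : ℕ => 1/(m:ℝ)^s) := by
    simpa using Real.summable_one_div_nat_rpow.mpr hs
  have hScomp : Summable (f ∘ fun m : ℕ => L * m) := by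
    rw [hcomp]; exact hS.mul_left _
  have hsum : Summable f := (hg.summable_iff hsupp').mp hScomp
  refine ⟨hsum, ?_⟩
  rw [← hg.tsum_eq hsupp, show (fun m : ℕ => f (L * m)) = _ from hcomp, tsum_mul_left]

theorem gcd_sum_zeta_identity (α : ℝ) (hα : 1 / 2 < α)
    (N : Finset ℕ) (hN : ∀ n ∈ N, 0 < n) (c : ℕ → ℂ) :
    Summable (fun n : ℕ =>
      ‖∑ k ∈ N.filter (· ∣ n), c k * (((k : ℝ) ^ α / (n : ℝ) ^ α : ℝ) : ℂ)‖ ^ 2) ∧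
    (∑' n : ℕ,
        (‖∑ k ∈ N.filter (· ∣ n), c k * (((k : ℝ) ^ α / (n : ℝ) ^ α : ℝ) : ℂ)‖ ^ 2 : ℂ)) =
      riemannZeta (2 * α) *
        ∑ m ∈ N, ∑ n ∈ N, c m * (starRingEnd ℂ) (c n) *
          (((Nat.gcd m n : ℝ) ^ (2 * α) / ((m * n : ℕ) : ℝ) ^ α : ℝ) : ℂ) := by
  have hα0 : 0 < α := by linarith
  set s : ℝ := 2 * α with hsdef
  have hs : 1 < s := by rw [hsdef]; linarith
  have hS : Summable (fun m : ℕ => 1/(m:ℝ)^s) := by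
    simpa using Real.summable_one_div_nat_rpow.mpr hs
  set S : ℝ := ∑' m : ℕ, 1/(m:ℝ)^s with hSdef
  set a : ℕ → ℂ := fun n => ∑ k ∈ N.filter (· ∣ n), c k * (((k : ℝ) ^ α / (n : ℝ) ^ α : ℝ) : ℂ)
    with ha
  -- rpow square fact
  have hsq : ∀ n : ℕ, (n:ℝ)^α * (n:ℝ)^α = (n:ℝ)^s := by
    intro n
    rw [hsdef, show (2:ℝ) * α = α + α by ring,
      Real.rpow_add' (Nat.cast_nonneg n) (by positivity)]
  -- Part 1 : summability
  set C : ℝ := ∑ k ∈ N, ‖c k‖ * (k:ℝ)^α with hC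
  have hbound : ∀ n : ℕ, ‖a n‖^2 ≤ C^2 * (1/(n:ℝ)^s) := by
    intro n
    rcases Nat.eq_zero_or_pos n with rfl | hn
    · have : a 0 = 0 := by
        rw [ha]
        refine Finset.sum_eq_zero fun k hk => ?_
        simp [Real.zero_rpow (ne_of_gt hα0)]
      simp [this, Real.zero_rpow (ne_of_gt (lt_trans one_pos hs))]
    · have hna : ‖a n‖ ≤ C / (n:ℝ)^α := by
        calc ‖a n‖ ≤ ∑ k ∈ N.filter (· ∣ n), ‖c k * (((k : ℝ) ^ α / (n : ℝ) ^ α : ℝ) : ℂ)‖ :=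
              norm_sum_le _ _
          _ = ∑ k ∈ N.filter (· ∣ n), ‖c k‖ * ((k:ℝ)^α / (n:ℝ)^α) := by
              refine Finset.sum_congr rfl fun k hk => ?_
              rw [norm_mul, Complex.norm_real, Real.norm_of_nonneg (by positivity)]
          _ ≤ ∑ k ∈ N, ‖c k‖ * ((k:ℝ)^α / (n:ℝ)^α) :=
              Finset.sum_le_sum_of_subset_of_nonneg (Finset.filter_subset _ _)
                (fun k _ _ => by positivity)
          _ = C / (n:ℝ)^α := by
              rw [hC, Finset.sum_div]
              exact Finset.sum_congr rfl fun k hk => by rw [mul_div_assoc]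
      have h2 : ‖a n‖^2 ≤ (C / (n:ℝ)^α)^2 := by
        have := norm_nonneg (a n)
        nlinarith
      refine h2.trans_eq ?_
      rw [div_pow, sq, sq, hsq n]
      ring
  have hCnn : 0 ≤ C := Finset.sum_nonneg fun k _ => by positivity
  have hsummable : Summable (fun n : ℕ => ‖a n‖^2) := by
    refine Summable.of_nonneg_of_le (fun n => by positivity) hbound ?_
    exact hS.mul_left _
  refine ⟨hsummable, ?_⟩
  -- zeta value
  have hzeta : riemannZeta (2 * α) = (S : ℂ) := by
    rw [zeta_eq_tsum_one_div_nat_cpow (by norm_num; linarith), hSdef, Complex.ofReal_tsum]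
    refine tsum_congr fun n => ?_
    rw [show ((2 : ℂ) * (α : ℂ)) = ((s : ℝ) : ℂ) by rw [hsdef]; push_cast; ring,
      ← Complex.ofReal_natCast n, ← Complex.ofReal_cpow (Nat.cast_nonneg n)]
    push_cast
    ring
  -- pointwise expansion
  have hkey : ∀ n : ℕ, ((‖a n‖^2 : ℝ) : ℂ)
      = ∑ k ∈ N, ∑ l ∈ N, (c k * (starRingEnd ℂ) (c l) * (((k:ℝ)^α * (l:ℝ)^α : ℝ) : ℂ))
          * (if Nat.lcm k l ∣ n then (((1/(n:ℝ)^s : ℝ)) : ℂ) else 0) := by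
    intro n
    have h1 : ((‖a n‖^2 : ℝ) : ℂ) = a n * (starRingEnd ℂ) (a n) := by
      rw [Complex.mul_conj, Complex.normSq_eq_norm_sq]
    rw [h1, ha]
    simp only [Finset.sum_filter, map_sum, Finset.sum_mul_sum]
    refine Finset.sum_congr rfl fun k hk => Finset.sum_congr rfl fun l hl => ?_
    have hdvd : Nat.lcm k l ∣ n ↔ k ∣ n ∧ l ∣ n :=
      ⟨fun h => ⟨(Nat.dvd_lcm_left k l).trans h, (Nat.dvd_lcm_right k l).trans h⟩,
       fun h => Nat.lcm_dvd h.1 h.2⟩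
    by_cases h1 : k ∣ n <;> by_cases h2 : l ∣ n
    · simp only [if_pos h1, if_pos h2, if_pos (hdvd.mpr ⟨h1, h2⟩), map_mul,
        Complex.conj_ofReal]
      have hre : ((k:ℝ)^α/(n:ℝ)^α) * ((l:ℝ)^α/(n:ℝ)^α)
          = ((k:ℝ)^α*(l:ℝ)^α)*(1/(n:ℝ)^s) := by
        rw [div_mul_div_comm, hsq n]
        ring
      have hreC := congrArg (fun x : ℝ => (x : ℂ)) hre
      push_cast at hreC ⊢
      linear_combination (c k * (starRingEnd ℂ) (c l)) * hreC
    all_goals simp [h1, h2, hdvd]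
  -- summability of each inner term
  have hindic : ∀ L : ℕ, (fun n : ℕ => if L ∣ n then (((1/(n:ℝ)^s : ℝ)) : ℂ) else 0)
      = fun n : ℕ => (((if L ∣ n then 1/(n:ℝ)^s else 0 : ℝ)) : ℂ) := by
    intro L; funext n; split <;> simp
  have hsummg : ∀ k ∈ N, ∀ l ∈ N, Summable (fun n : ℕ =>
      (c k * (starRingEnd ℂ) (c l) * (((k:ℝ)^α * (l:ℝ)^α : ℝ) : ℂ))
        * (if Nat.lcm k l ∣ n then (((1/(n:ℝ)^s : ℝ)) : ℂ) else 0)) := by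
    intro k hk l hl
    have hL : 0 < Nat.lcm k l :=
      Nat.pos_of_ne_zero (Nat.lcm_ne_zero (hN k hk).ne' (hN l hl).ne')
    refine Summable.mul_left _ ?_
    rw [hindic]
    exact Complex.summable_ofReal.mpr (tsum_multiples _ hL s hs).1
  -- swap sum and tsum
  calc (∑' n : ℕ, ((‖a n‖ : ℂ)^2))
      = ∑' n : ℕ, ((‖a n‖^2 : ℝ) : ℂ) := tsum_congr fun n => by push_cast; ring
    _ = ∑' n : ℕ, ∑ k ∈ N, ∑ l ∈ N, (c k * (starRingEnd ℂ) (c l) * (((k:ℝ)^α * (l:ℝ)^α : ℝ) : ℂ))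
          * (if Nat.lcm k l ∣ n then (((1/(n:ℝ)^s : ℝ)) : ℂ) else 0) := tsum_congr hkey
    _ = ∑ k ∈ N, ∑' n : ℕ, ∑ l ∈ N, (c k * (starRingEnd ℂ) (c l) * (((k:ℝ)^α * (l:ℝ)^α : ℝ) : ℂ))
          * (if Nat.lcm k l ∣ n then (((1/(n:ℝ)^s : ℝ)) : ℂ) else 0) :=
        Summable.tsum_finsetSum fun k hk => summable_sum fun l hl => hsummg k hk l hl
    _ = ∑ k ∈ N, ∑ l ∈ N, ∑' n : ℕ, (c k * (starRingEnd ℂ) (c l) * (((k:ℝ)^α * (l:ℝ)^α : ℝ) : ℂ))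
          * (if Nat.lcm k l ∣ n then (((1/(n:ℝ)^s : ℝ)) : ℂ) else 0) :=
        Finset.sum_congr rfl fun k hk => Summable.tsum_finsetSum fun l hl => hsummg k hk l hl
    _ = ∑ k ∈ N, ∑ l ∈ N, (S : ℂ) * (c k * (starRingEnd ℂ) (c l) *
          (((Nat.gcd k l : ℝ) ^ (2 * α) / ((k * l : ℕ) : ℝ) ^ α : ℝ) : ℂ)) := by
        refine Finset.sum_congr rfl fun k hk => Finset.sum_congr rfl fun l hl => ?_
        have hk0 : 0 < k := hN k hk
        have hl0 : 0 < l := hN l hl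
        have hL0 : 0 < Nat.lcm k l :=
          Nat.pos_of_ne_zero (Nat.lcm_ne_zero hk0.ne' hl0.ne')
        rw [tsum_mul_left, hindic, ← Complex.ofReal_tsum, (tsum_multiples _ hL0 s hs).2]
        have hgl : ((Nat.gcd k l : ℝ)) * ((Nat.lcm k l : ℝ)) = (k:ℝ) * (l:ℝ) := by
          exact_mod_cast congrArg (Nat.cast : ℕ → ℝ) (Nat.gcd_mul_lcm k l)
        have hreal : ((k:ℝ)^α * (l:ℝ)^α) * (1/((Nat.lcm k l : ℝ))^s * S)
            = (Nat.gcd k l : ℝ)^(2*α) / (((k*l:ℕ)):ℝ)^α * S := by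
          have hx : ((k:ℝ)*(l:ℝ))^α * ((k:ℝ)*(l:ℝ))^α
              = (Nat.gcd k l : ℝ)^s * (Nat.lcm k l : ℝ)^s := by
            have e1 : (Nat.gcd k l:ℝ)^s * (Nat.lcm k l:ℝ)^s = ((k:ℝ)*(l:ℝ))^s := by
              rw [← Real.mul_rpow (Nat.cast_nonneg _) (Nat.cast_nonneg _), hgl]
            rw [e1, hsdef, show (2:ℝ)*α = α + α by ring,
              Real.rpow_add' (by positivity) (by positivity)]
          rw [← Real.mul_rpow (by positivity) (by positivity)]
          rw [← hsdef]
          push_cast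
          have hLs : (0:ℝ) < ((Nat.lcm k l : ℝ))^s := by positivity
          have hklα : (0:ℝ) < ((k:ℝ)*(l:ℝ))^α := by positivity
          field_simp
          linear_combination S * hx
        have hthis := congrArg (fun x : ℝ => (x : ℂ)) hreal
        push_cast at hthis
        have hSC : (∑' (m : ℕ), 1 / ((((m:ℝ) ^ s : ℝ)) : ℂ)) = (S : ℂ) := by
          rw [hSdef, Complex.ofReal_tsum]
          exact tsum_congr fun m => by push_cast; rfl
        push_cast
        linear_combination (c k * (starRingEnd ℂ) (c l)) * hthis
          + (c k * (starRingEnd ℂ) (c l) * ((((k:ℝ)^α : ℝ)):ℂ) * ((((l:ℝ)^α : ℝ)):ℂ)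
              * (((((Nat.lcm k l : ℝ))^s : ℝ) : ℂ))⁻¹) * hSC
    _ = riemannZeta (2 * α) *
        ∑ m ∈ N, ∑ n ∈ N, c m * (starRingEnd ℂ) (c n) *
          (((Nat.gcd m n : ℝ) ^ (2 * α) / ((m * n : ℕ) : ℝ) ^ α : ℝ) : ℂ) := by
        rw [hzeta]
        simp [Finset.mul_sum]
end

section
/- Let p_1, …, p_r be distinct primes, let ℓ ≥ 1 be an integer, and set P = (p_1 ⋯ p_r)^{ℓ−1}. Then Σ_{m ∣ P} Σ_{n ∣ P} gcd(m,n)^2/(m n) = ∏_{i=1}^{r} ( ℓ + 2 Σ_{v=1}^{ℓ−1} (ℓ − v)/p_i^{v} ), where the outer sums range over all positive divisors m, n of P. -/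
open Real Finset

private lemma sum_div_split (f : ℕ → ℝ) {M N : ℕ} (h : M.Coprime N) (hM : M ≠ 0) (hN : N ≠ 0) :
    ∑ d ∈ (M * N).divisors, f d = ∑ a ∈ M.divisors, ∑ b ∈ N.divisors, f (a * b) := by
  rw [← Finset.sum_product']
  refine Finset.sum_nbij' (fun d => (d.gcd M, d.gcd N)) (fun x => x.1 * x.2) ?_ ?_ ?_ ?_ ?_
  · intro d hd
    rw [Nat.mem_divisors] at hd
    simp [Finset.mem_product, Nat.mem_divisors, Nat.gcd_dvd_right, hM, hN]
  · rintro ⟨a, b⟩ hab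
    simp only [Finset.mem_product, Nat.mem_divisors] at hab
    exact Nat.mem_divisors.2 ⟨mul_dvd_mul hab.1.1 hab.2.1, mul_ne_zero hM hN⟩
  · intro d hd
    rw [Nat.mem_divisors] at hd
    show d.gcd M * d.gcd N = d
    rw [← Nat.Coprime.gcd_mul d h, Nat.gcd_eq_left hd.1]
  · rintro ⟨a, b⟩ hab
    simp only [Finset.mem_product, Nat.mem_divisors] at hab
    have hbM : Nat.Coprime b M := ((Nat.Coprime.symm h).coprime_dvd_left hab.2.1)
    have haN : Nat.Coprime a N := (h.coprime_dvd_left hab.1.1)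
    show ((a * b).gcd M, (a * b).gcd N) = (a, b)
    rw [Prod.mk.injEq]
    constructor
    · rw [Nat.Coprime.gcd_mul_right_cancel a hbM, Nat.gcd_eq_left hab.1.1]
    · rw [Nat.Coprime.gcd_mul_left_cancel b haN, Nat.gcd_eq_left hab.2.1]
  · intro d hd
    rw [Nat.mem_divisors] at hd
    show f d = f (d.gcd M * d.gcd N)
    rw [← Nat.Coprime.gcd_mul d h, Nat.gcd_eq_left hd.1]

private lemma gcd_pow_min (p a b : ℕ) :
    Nat.gcd (p ^ a) (p ^ b) = p ^ min a b := by
  rcases le_total a b with hab | hab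
  · rw [Nat.gcd_eq_left (pow_dvd_pow p hab), min_eq_left hab]
  · rw [Nat.gcd_eq_right (pow_dvd_pow p hab), min_eq_right hab]

private lemma sum_abs_pow (x : ℝ) (k : ℕ) :
    ∑ a ∈ Finset.range (k + 1), ∑ b ∈ Finset.range (k + 1), x ^ (a + b - 2 * min a b) =
      ((k : ℝ) + 1) + 2 * ∑ v ∈ Finset.Icc 1 k, ((k : ℝ) + 1 - (v : ℝ)) * x ^ v := by
  induction k with
  | zero => simp
  | succ k ih =>
    have key : ∀ a ∈ Finset.range (k + 1), x ^ (a + (k+1) - 2 * min a (k+1)) = x ^ (k + 1 - a) := by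
      intro a ha
      rw [Finset.mem_range] at ha
      rw [min_eq_left (by omega : a ≤ k + 1)]
      congr 1
      omega
    have key2 : ∀ b ∈ Finset.range (k + 1), x ^ ((k+1) + b - 2 * min (k+1) b) = x ^ (k + 1 - b) := by
      intro b hb
      rw [Finset.mem_range] at hb
      rw [min_eq_right (by omega : b ≤ k + 1)]
      congr 1
      omega
    have hrefl : ∑ a ∈ Finset.range (k + 1), x ^ (k + 1 - a) =
        ∑ v ∈ Finset.Icc 1 (k+1), x ^ v := by
      refine Finset.sum_nbij' (fun a => k + 1 - a) (fun v => k + 1 - v) ?_ ?_ ?_ ?_ ?_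
      · intro a ha; rw [Finset.mem_range] at ha; simp only [Finset.mem_Icc]; omega
      · intro v hv; simp only [Finset.mem_Icc] at hv; simp only [Finset.mem_range]; omega
      · intro a ha; rw [Finset.mem_range] at ha; show k + 1 - (k + 1 - a) = a; omega
      · intro v hv; simp only [Finset.mem_Icc] at hv; show k + 1 - (k + 1 - v) = v; omega
      · intro a _; rfl
    have h1 : ∀ a ∈ Finset.range (k+1), ∑ b ∈ Finset.range (k+2), x ^ (a + b - 2 * min a b) =
        (∑ b ∈ Finset.range (k+1), x ^ (a + b - 2 * min a b)) + x ^ (k + 1 - a) := by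
      intro a ha
      rw [Finset.sum_range_succ, key a ha]
    have h2 : ∑ b ∈ Finset.range (k+2), x ^ ((k+1) + b - 2 * min (k+1) b) =
        (∑ v ∈ Finset.Icc 1 (k+1), x ^ v) + 1 := by
      rw [Finset.sum_range_succ, Finset.sum_congr rfl key2, hrefl]
      congr 1
      rw [show (k+1) + (k+1) - 2 * min (k+1) (k+1) = 0 from by rw [min_self]; omega, pow_zero]
    rw [Finset.sum_range_succ, Finset.sum_congr rfl h1, Finset.sum_add_distrib, ih, hrefl, h2]
    have hIcc : ∑ v ∈ Finset.Icc 1 (k+1), ((k : ℝ) + 1 + 1 - (v : ℝ)) * x ^ v =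
        (∑ v ∈ Finset.Icc 1 (k+1), ((k : ℝ) + 1 - (v : ℝ)) * x ^ v) +
          ∑ v ∈ Finset.Icc 1 (k+1), x ^ v := by
      rw [← Finset.sum_add_distrib]
      exact Finset.sum_congr rfl fun v hv => by ring
    have hsplit : ∑ v ∈ Finset.Icc 1 (k+1), ((k : ℝ) + 1 - (v : ℝ)) * x ^ v =
        ∑ v ∈ Finset.Icc 1 k, ((k : ℝ) + 1 - (v : ℝ)) * x ^ v := by
      rw [show Finset.Icc 1 (k+1) = insert (k+1) (Finset.Icc 1 k) from ?_]
      · rw [Finset.sum_insert (by simp)]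
        push_cast
        ring
      · ext i; simp only [Finset.mem_insert, Finset.mem_Icc]; omega
    push_cast
    rw [hIcc, hsplit]
    ring

private lemma prime_pow_case (p : ℕ) (hp : p.Prime) (k : ℕ) :
    ∑ m ∈ (p ^ k).divisors, ∑ n ∈ (p ^ k).divisors,
        (Nat.gcd m n : ℝ) ^ 2 / ((m : ℝ) * (n : ℝ)) =
      ((k : ℝ) + 1) + 2 * ∑ v ∈ Finset.Icc 1 k, ((k : ℝ) + 1 - (v : ℝ)) / (p : ℝ) ^ v := by
  have hp1 : (1:ℝ) < (p:ℝ) := by exact_mod_cast hp.one_lt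
  have hppos : (0:ℝ) < (p:ℝ) := by linarith
  rw [Nat.sum_divisors_prime_pow hp]
  rw [Finset.sum_congr rfl (fun a _ => Nat.sum_divisors_prime_pow hp)]
  have hterm : ∀ a b : ℕ, (Nat.gcd (p^a) (p^b) : ℝ) ^ 2 / (((p^a : ℕ) : ℝ) * ((p^b : ℕ) : ℝ)) =
      ((p:ℝ)⁻¹) ^ (a + b - 2 * min a b) := by
    intro a b
    rw [gcd_pow_min p a b]
    push_cast
    have hab : (p:ℝ)^a * (p:ℝ)^b = ((p:ℝ)^(min a b))^2 * (p:ℝ)^(a+b-2*min a b) := by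
      have he : min a b * 2 + (a + b - 2 * min a b) = a + b := by
        rcases le_total a b with hle | hle
        · rw [min_eq_left hle]; omega
        · rw [min_eq_right hle]; omega
      rw [← pow_mul, ← pow_add, ← pow_add, he]
    rw [inv_pow, hab, ← div_div, div_self (by positivity), one_div]
  rw [Finset.sum_congr rfl (fun a _ => Finset.sum_congr rfl (fun b _ => hterm a b))]
  rw [sum_abs_pow ((p:ℝ)⁻¹) k]
  congr 2
  exact Finset.sum_congr rfl fun v _ => by rw [inv_pow, div_eq_mul_inv]

private lemma main_aux (k : ℕ) : ∀ (r : ℕ) (p : Fin r → ℕ), (∀ i, (p i).Prime) →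
    Function.Injective p →
    ∑ m ∈ ((∏ i : Fin r, p i) ^ k).divisors, ∑ n ∈ ((∏ i : Fin r, p i) ^ k).divisors,
        (Nat.gcd m n : ℝ) ^ 2 / ((m : ℝ) * (n : ℝ)) =
      ∏ i : Fin r,
        (((k:ℝ) + 1) + 2 * ∑ v ∈ Finset.Icc 1 k, ((k:ℝ) + 1 - (v : ℝ)) / (p i : ℝ) ^ v) := by
  intro r
  induction r with
  | zero => intro p _ _; simp
  | succ r ih =>
    intro p hp hinj
    have hco : Nat.Coprime (p 0) (∏ i : Fin r, p i.succ) := by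
      apply Nat.Coprime.prod_right
      intro i _
      exact (Nat.coprime_primes (hp 0) (hp i.succ)).2
        fun h => (Fin.succ_ne_zero i) ((hinj h).symm)
    have hcop : Nat.Coprime ((p 0) ^ k) ((∏ i : Fin r, p i.succ) ^ k) := Nat.Coprime.pow _ _ hco
    have hA0 : (p 0) ^ k ≠ 0 := pow_ne_zero _ (hp 0).pos.ne'
    have hB0 : (∏ i : Fin r, p i.succ) ^ k ≠ 0 :=
      pow_ne_zero _ (Finset.prod_pos fun i _ => (hp i.succ).pos).ne'
    have hgoalL : (∏ i : Fin (r+1), p i) ^ k = (p 0) ^ k * (∏ i : Fin r, p i.succ) ^ k := by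
      rw [Fin.prod_univ_succ, mul_pow]
    rw [hgoalL]
    rw [sum_div_split _ hcop hA0 hB0]
    rw [Finset.sum_congr rfl (fun a _ => Finset.sum_congr rfl (fun b _ =>
        sum_div_split _ hcop hA0 hB0))]
    have hpt : ∀ a ∈ ((p 0) ^ k).divisors, ∀ b ∈ ((∏ i : Fin r, p i.succ) ^ k).divisors,
        ∀ c ∈ ((p 0) ^ k).divisors, ∀ d ∈ ((∏ i : Fin r, p i.succ) ^ k).divisors,
        (Nat.gcd (a*b) (c*d) : ℝ)^2 / (((a*b : ℕ):ℝ) * ((c*d : ℕ):ℝ)) =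
          ((Nat.gcd a c : ℝ)^2 / ((a:ℝ)*(c:ℝ))) * ((Nat.gcd b d : ℝ)^2 / ((b:ℝ)*(d:ℝ))) := by
      intro a ha b hb c hc d hd
      rw [Nat.mem_divisors] at ha hb hc hd
      have h1 : Nat.Coprime b c :=
        (Nat.Coprime.coprime_dvd_left hb.1 hcop.symm).coprime_dvd_right hc.1
      have h2 : Nat.Coprime a d :=
        (Nat.Coprime.coprime_dvd_left ha.1 hcop).coprime_dvd_right hd.1
      have h3 : Nat.Coprime c d :=
        (Nat.Coprime.coprime_dvd_left hc.1 hcop).coprime_dvd_right hd.1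
      have hg : Nat.gcd (a*b) (c*d) = Nat.gcd a c * Nat.gcd b d := by
        rw [Nat.Coprime.gcd_mul (a*b) h3, Nat.Coprime.gcd_mul_right_cancel a h1,
          Nat.Coprime.gcd_mul_left_cancel b h2]
      have ha' : a ≠ 0 := by rintro rfl; exact hA0 (zero_dvd_iff.mp ha.1)
      have hb' : b ≠ 0 := by rintro rfl; exact hB0 (zero_dvd_iff.mp hb.1)
      have hc' : c ≠ 0 := by rintro rfl; exact hA0 (zero_dvd_iff.mp hc.1)
      have hd' : d ≠ 0 := by rintro rfl; exact hB0 (zero_dvd_iff.mp hd.1)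
      rw [hg]
      push_cast
      field_simp
    rw [Finset.sum_congr rfl (fun a ha => Finset.sum_congr rfl (fun b hb =>
      Finset.sum_congr rfl (fun c hc => Finset.sum_congr rfl (fun d hd =>
        hpt a ha b hb c hc d hd))))]
    have factor : ∀ (S T : Finset ℕ) (F G : ℕ → ℕ → ℝ),
        ∑ a ∈ S, ∑ b ∈ T, ∑ c ∈ S, ∑ d ∈ T, F a c * G b d
          = (∑ a ∈ S, ∑ c ∈ S, F a c) * (∑ b ∈ T, ∑ d ∈ T, G b d) := by
      intro S T F G
      rw [Finset.sum_mul_sum S T (fun a => ∑ c ∈ S, F a c) (fun b => ∑ d ∈ T, G b d)]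
      refine Finset.sum_congr rfl fun a _ => Finset.sum_congr rfl fun b _ => ?_
      exact (Finset.sum_mul_sum S T (fun c => F a c) (fun d => G b d)).symm
    rw [factor]
    rw [prime_pow_case (p 0) (hp 0) k,
      ih (fun i => p i.succ) (fun i => hp i.succ)
        (fun i j h => Fin.succ_injective r (hinj h)), Fin.prod_univ_succ]

theorem gal_divisor_identity (r : ℕ) (p : Fin r → ℕ) (hp : ∀ i, (p i).Prime)
    (hinj : Function.Injective p) (ℓ : ℕ) (hℓ : 1 ≤ ℓ) :
    ∑ m ∈ ((∏ i : Fin r, p i) ^ (ℓ - 1)).divisors,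
      ∑ n ∈ ((∏ i : Fin r, p i) ^ (ℓ - 1)).divisors,
        (Nat.gcd m n : ℝ) ^ 2 / ((m : ℝ) * (n : ℝ)) =
      ∏ i : Fin r,
        ((ℓ : ℝ) + 2 * ∑ v ∈ Finset.Icc 1 (ℓ - 1), ((ℓ : ℝ) - (v : ℝ)) / (p i : ℝ) ^ v) := by
  obtain ⟨k, rfl⟩ : ∃ k, ℓ = k + 1 := ⟨ℓ - 1, (Nat.succ_pred_eq_of_pos hℓ).symm⟩
  simp only [Nat.add_sub_cancel]
  rw [main_aux k r p hp hinj]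
  push_cast
  rfl
end

section
/- For every real y ≥ 2, the sum Σ 1/j over all positive integers j all of whose prime factors are at most y equals the finite product ∏_{p ≤ y, p prime} (1 − 1/p)^{−1}; moreover there exists an absolute constant C > 0 such that this quantity is at most C log y for all y ≥ 2. -/
open Real Finset

private def Pr (n : ℕ) : Finset ℕ := (Finset.range (n+1)).filter Nat.Prime

private lemma mem_Pr {p n : ℕ} : p ∈ Pr n ↔ p ≤ n ∧ p.Prime := by
  simp [Pr, Nat.lt_succ_iff, and_comm]

private lemma pow_dvd_fact {p n : ℕ} (hp : p.Prime) (hpn : p ≤ n) : p ^ (n / p) ∣ (Nat.factorial n) := by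
  have hb : Nat.log p n < Nat.log p n + 1 := Nat.lt_succ_self _
  rw [Nat.Prime.pow_dvd_factorial_iff hp hb]
  have h1 : 1 ∈ Finset.Ico 1 (Nat.log p n + 1) := by
    simp only [Finset.mem_Ico]
    have : 1 ≤ Nat.log p n := Nat.le_log_of_pow_le hp.one_lt (by simpa using hpn)
    omega
  calc n / p = n / p ^ 1 := by rw [pow_one]
    _ ≤ ∑ i ∈ Finset.Ico 1 (Nat.log p n + 1), n / p ^ i :=
        Finset.single_le_sum (f := fun i => n / p ^ i) (fun i _ => Nat.zero_le _) h1

private lemma prod_pow_dvd_factorial (n : ℕ) :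
    (∏ p ∈ Pr n, p ^ (n / p)) ∣ (Nat.factorial n) := by
  classical
  have : ∀ s : Finset ℕ, s ⊆ Pr n → (∏ p ∈ s, p ^ (n / p)) ∣ (Nat.factorial n) := by
    intro s
    induction s using Finset.induction with
    | empty => intro _; simpa using Nat.one_dvd _
    | insert p s hps ih =>
      intro hsub
      have hp := (mem_Pr.mp (hsub (Finset.mem_insert_self p s)))
      have hsub' : s ⊆ Pr n := fun q hq => hsub (Finset.mem_insert_of_mem hq)
      rw [Finset.prod_insert hps]
      refine Nat.Coprime.mul_dvd_of_dvd_of_dvd ?_ (pow_dvd_fact hp.2 hp.1) (ih hsub')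
      refine Nat.Coprime.pow_left _ (Nat.Coprime.prod_right fun q hq => ?_)
      have hq' := (mem_Pr.mp (hsub' hq))
      have hne : p ≠ q := fun h => hps (h ▸ hq)
      exact Nat.Coprime.pow_right _ ((Nat.coprime_primes hp.2 hq'.2).mpr hne)
  exact this _ (le_refl _)

private lemma mertens1 {n : ℕ} (hn : 2 ≤ n) :
    ∑ p ∈ Pr n, Real.log p / p ≤ Real.log n + Real.log 4 := by
  have hn0 : (0:ℝ) < n := by positivity
  -- log of the divisor
  have hdvd := prod_pow_dvd_factorial n
  have hDpos : 0 < (∏ p ∈ Pr n, p ^ (n / p)) := Finset.prod_pos fun p hp =>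
    pow_pos (mem_Pr.mp hp).2.pos _
  have hle : ((∏ p ∈ Pr n, p ^ (n / p) : ℕ) : ℝ) ≤ ((Nat.factorial n) : ℝ) := by
    exact_mod_cast Nat.le_of_dvd (Nat.factorial_pos n) hdvd
  have hlog1 : Real.log (∏ p ∈ Pr n, p ^ (n / p) : ℕ) ≤ Real.log ((Nat.factorial n)) :=
    Real.log_le_log (by exact_mod_cast hDpos) hle
  have hlogD : Real.log ((∏ p ∈ Pr n, p ^ (n / p) : ℕ) : ℝ)
      = ∑ p ∈ Pr n, ((n / p : ℕ) : ℝ) * Real.log p := by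
    push_cast
    rw [Real.log_prod (fun p hp => by
      have := (mem_Pr.mp hp).2.pos
      positivity)]
    refine Finset.sum_congr rfl fun p hp => ?_
    rw [Real.log_pow]
  -- log n! ≤ n log n
  have hfact : Real.log ((Nat.factorial n)) ≤ n * Real.log n := by
    calc Real.log ((Nat.factorial n)) ≤ Real.log ((n:ℕ) ^ n : ℕ) :=
          Real.log_le_log (by exact_mod_cast (Nat.factorial_pos n))
            (by exact_mod_cast Nat.factorial_le_pow n)
      _ = n * Real.log n := by push_cast; rw [Real.log_pow]
  -- theta bound
  have htheta : ∑ p ∈ Pr n, Real.log p ≤ n * Real.log 4 := by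
    have h1 : (∏ p ∈ Pr n, p) ≤ 4 ^ n := primorial_le_4_pow n
    have hpos : 0 < ∏ p ∈ Pr n, p := Finset.prod_pos fun p hp => (mem_Pr.mp hp).2.pos
    have h2 : Real.log ((∏ p ∈ Pr n, p : ℕ) : ℝ) ≤ Real.log (((4 ^ n : ℕ) : ℝ)) :=
      Real.log_le_log (by exact_mod_cast hpos) (by exact_mod_cast h1)
    rw [Nat.cast_prod, Real.log_prod (fun p hp => by
        have := (mem_Pr.mp hp).2.pos; positivity)] at h2
    calc ∑ p ∈ Pr n, Real.log p ≤ Real.log (((4 ^ n : ℕ) : ℝ)) := h2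
      _ = n * Real.log 4 := by push_cast; rw [Real.log_pow]
  -- floor bound: (n/p : ℕ) ≥ n/p - 1
  have hfloor : ∀ p ∈ Pr n, ((n:ℝ) / p - 1) * Real.log p ≤ ((n / p : ℕ) : ℝ) * Real.log p := by
    intro p hp
    have hp' := mem_Pr.mp hp
    have hlp : 0 ≤ Real.log p :=
      Real.log_nonneg (by exact_mod_cast hp'.2.one_lt.le)
    refine mul_le_mul_of_nonneg_right ?_ hlp
    have : (n / p : ℕ) = ⌊(n:ℝ)/(p:ℝ)⌋₊ := by
      rw [Nat.floor_div_natCast, Nat.floor_natCast]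
    rw [this]
    have := Nat.sub_one_lt_floor ((n:ℝ)/(p:ℝ))
    linarith
  have hmain : (n:ℝ) * ∑ p ∈ Pr n, Real.log p / p - ∑ p ∈ Pr n, Real.log p
      ≤ n * Real.log n := by
    calc (n:ℝ) * ∑ p ∈ Pr n, Real.log p / p - ∑ p ∈ Pr n, Real.log p
        = ∑ p ∈ Pr n, ((n:ℝ) / p - 1) * Real.log p := by
          rw [Finset.mul_sum, ← Finset.sum_sub_distrib]
          refine Finset.sum_congr rfl fun p hp => ?_
          field_simp
      _ ≤ ∑ p ∈ Pr n, ((n / p : ℕ) : ℝ) * Real.log p := Finset.sum_le_sum hfloor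
      _ = Real.log ((∏ p ∈ Pr n, p ^ (n / p) : ℕ) : ℝ) := hlogD.symm
      _ ≤ Real.log ((Nat.factorial n)) := hlog1
      _ ≤ n * Real.log n := hfact
  have : (n:ℝ) * ∑ p ∈ Pr n, Real.log p / p ≤ n * Real.log n + n * Real.log 4 := by
    linarith
  calc ∑ p ∈ Pr n, Real.log p / p
      = (n:ℝ) * (∑ p ∈ Pr n, Real.log p / p) / n := by field_simp
    _ ≤ ((n:ℝ) * Real.log n + n * Real.log 4) / n := by gcongr
    _ = Real.log n + Real.log 4 := by field_simp

private lemma one_sub_inv_le_log {x : ℝ} (hx : 0 < x) : 1 - x⁻¹ ≤ Real.log x := by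
  have h := Real.log_le_sub_one_of_pos (inv_pos.mpr hx)
  rw [Real.log_inv] at h
  linarith

private lemma Pr_succ (n : ℕ) :
    Pr (n+1) = if Nat.Prime (n+1) then insert (n+1) (Pr n) else Pr n := by
  rw [Pr, Pr, Finset.range_add_one, Finset.filter_insert]

private lemma T_nonneg (n : ℕ) : 0 ≤ ∑ p ∈ Pr n, Real.log p / p := by
  refine Finset.sum_nonneg fun p hp => ?_
  have h := (mem_Pr.mp hp).2.one_lt
  have h1 : (1:ℝ) ≤ p := by exact_mod_cast h.le
  have := Real.log_nonneg h1
  positivity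

private lemma mertens2_aux : ∀ n : ℕ, 2 ≤ n →
    ∑ p ∈ Pr n, 1/(p:ℝ) ≤ (∑ p ∈ Pr n, Real.log p / p) / Real.log n
      + Real.log (Real.log n) - Real.log 4 / Real.log n + 3 := by
  intro n hn
  induction n, hn using Nat.le_induction with
  | base =>
    have hPr2 : Pr 2 = {2} := by decide
    rw [hPr2]
    simp only [Finset.sum_singleton]
    have hl2 : (0:ℝ) < Real.log 2 := Real.log_pos (by norm_num)
    have e1 : Real.log (2:ℕ) / (2:ℕ) / Real.log (2:ℕ) = 1/2 := by
      push_cast; field_simp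
    have e2 : Real.log 4 = 2 * Real.log 2 := by
      rw [show (4:ℝ) = 2^2 by norm_num, Real.log_pow]; push_cast; ring
    have e3 : Real.log 4 / Real.log (2:ℕ) = 2 := by
      push_cast; rw [e2]; field_simp
    have h4 : (1:ℝ)/2 ≤ Real.log 2 := by
      have := one_sub_inv_le_log (x := 2) (by norm_num)
      norm_num at this; linarith
    have h5 : Real.log (Real.log 2) ≥ -1 := by
      have h6 : Real.log (Real.log 2) ≥ Real.log (1/2) :=
        Real.log_le_log (by norm_num) h4
      have h7 : Real.log (1/2) = -Real.log 2 := by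
        rw [one_div, Real.log_inv]
      have h8 : Real.log 2 ≤ 1 := by
        have := Real.log_le_sub_one_of_pos (x := 2) (by norm_num)
        linarith
      rw [h7] at h6; linarith
    push_cast
    push_cast at e1 e3 h5
    rw [e1, e3] at *
    linarith [h5]
  | succ n hn ih =>
    set a := Real.log n with ha
    set b := Real.log (n+1 : ℕ) with hb
    have hn2 : (2:ℝ) ≤ (n:ℝ) := by exact_mod_cast hn
    have ha0 : 0 < a := Real.log_pos (by linarith)
    have hab : a ≤ b := by
      rw [ha, hb]; push_cast
      exact Real.log_le_log (by linarith) (by linarith)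
    have hb0 : 0 < b := lt_of_lt_of_le ha0 hab
    set T := ∑ p ∈ Pr n, Real.log p / p with hT
    -- the monotonicity inequality
    have hM2 : T / a + Real.log a - Real.log 4 / a ≤ T / b + Real.log b - Real.log 4 / b := by
      have hK : (b - a)/b ≤ Real.log b - Real.log a := by
        have h1 : 1 - (b/a)⁻¹ ≤ Real.log (b/a) := one_sub_inv_le_log (by positivity)
        rw [Real.log_div (ne_of_gt hb0) (ne_of_gt ha0)] at h1
        have e : (b/a)⁻¹ = a/b := by field_simp
        rw [e] at h1
        have : (b-a)/b = 1 - a/b := by field_simp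
        rw [this]; linarith
      rcases le_or_gt (T - Real.log 4) 0 with hc | hc
      · have hiv : 0 ≤ 1/a - 1/b := by
          have := one_div_le_one_div_of_le ha0 hab
          linarith
        have h1 : (T - Real.log 4) * (1/a - 1/b) ≤ 0 := mul_nonpos_of_nonpos_of_nonneg hc hiv
        have h2 : 0 ≤ Real.log b - Real.log a := by
          have := Real.log_le_log ha0 hab; linarith
        have expand : (T - Real.log 4) * (1/a - 1/b)
            = (T/a - Real.log 4/a) - (T/b - Real.log 4/b) := by
          field_simp
        rw [expand] at h1
        linarith
      · have hTa : T - Real.log 4 ≤ a := by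
          have := mertens1 hn; rw [← hT, ← ha] at this; linarith
        have hiv : 0 ≤ 1/a - 1/b := by
          have := one_div_le_one_div_of_le ha0 hab
          linarith
        have h1 : (T - Real.log 4) * (1/a - 1/b) ≤ a * (1/a - 1/b) :=
          mul_le_mul_of_nonneg_right hTa hiv
        have h2 : a * (1/a - 1/b) = (b - a)/b := by field_simp
        have expand : (T - Real.log 4) * (1/a - 1/b)
            = (T/a - Real.log 4/a) - (T/b - Real.log 4/b) := by
          field_simp
        rw [expand] at h1
        rw [h2] at h1
        linarith
    rw [Pr_succ n]
    split_ifs with hp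
    · rw [Finset.sum_insert (fun h => by have := (mem_Pr.mp h).1; omega),
        Finset.sum_insert (fun h => by have := (mem_Pr.mp h).1; omega)]
      rw [← hT]
      have hcast : ((n:ℝ)+1) = ((n+1 : ℕ) : ℝ) := by push_cast; ring
      have hn1 : (0:ℝ) < (n+1 : ℕ) := by positivity
      have e1 : (Real.log (n+1:ℕ) / (n+1:ℕ) + T) / b = 1/((n+1:ℕ):ℝ) + T / b := by
        rw [add_div, hb]
        congr 1
        rw [div_div, mul_comm, ← div_div]
        rw [div_self (ne_of_gt (Real.log_pos (by push_cast; linarith)))]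
      calc 1/((n+1:ℕ):ℝ) + ∑ p ∈ Pr n, 1/(p:ℝ)
          ≤ 1/((n+1:ℕ):ℝ) + (T / a + Real.log a - Real.log 4 / a + 3) := by
            rw [hT, ha]; linarith [ih]
        _ ≤ 1/((n+1:ℕ):ℝ) + (T / b + Real.log b - Real.log 4 / b + 3) := by linarith
        _ = (Real.log (n+1:ℕ) / (n+1:ℕ) + T) / b + Real.log b - Real.log 4 / b + 3 := by
            rw [e1]; ring
    · rw [← hT]
      calc ∑ p ∈ Pr n, 1/(p:ℝ) ≤ T / a + Real.log a - Real.log 4 / a + 3 := by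
            rw [hT, ha]; exact ih
        _ ≤ T / b + Real.log b - Real.log 4 / b + 3 := by linarith

private lemma mertens2 {n : ℕ} (hn : 2 ≤ n) :
    ∑ p ∈ Pr n, 1/(p:ℝ) ≤ Real.log (Real.log n) + 6 := by
  have h := mertens2_aux n hn
  have hn2 : (2:ℝ) ≤ (n:ℝ) := by exact_mod_cast hn
  have hl2 : (0:ℝ) < Real.log 2 := Real.log_pos (by norm_num)
  have hln : Real.log 2 ≤ Real.log n := Real.log_le_log (by norm_num) hn2
  have hln0 : 0 < Real.log n := lt_of_lt_of_le hl2 hln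
  have h4 : (0:ℝ) ≤ Real.log 4 := Real.log_nonneg (by norm_num)
  have e2 : Real.log 4 = 2 * Real.log 2 := by
    rw [show (4:ℝ) = 2^2 by norm_num, Real.log_pow]; push_cast; ring
  have hT := mertens1 hn
  have h1 : (∑ p ∈ Pr n, Real.log p / p) / Real.log n ≤ (Real.log n + Real.log 4) / Real.log n :=
    by gcongr
  have h2 : (Real.log n + Real.log 4) / Real.log n = 1 + Real.log 4 / Real.log n := by
    field_simp
  have h3 : Real.log 4 / Real.log n ≤ Real.log 4 / Real.log 2 := by gcongr
  have h5 : Real.log 4 / Real.log 2 = 2 := by rw [e2]; field_simp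
  have h6 : 0 ≤ Real.log 4 / Real.log n := by positivity
  linarith

private lemma sq_sum_aux : ∀ n : ℕ, 1 ≤ n →
    ∑ k ∈ Finset.Ico 2 (n+1), (1/(k:ℝ))^2 ≤ 1 - 1/(n:ℝ) := by
  intro n hn
  induction n, hn using Nat.le_induction with
  | base => simp
  | succ n hn ih =>
    rw [Finset.sum_Ico_succ_top (by omega)]
    have hm : (1:ℝ) ≤ (n:ℝ) := by exact_mod_cast hn
    have h1 : (1/((n:ℝ)+1))^2 ≤ 1/(n:ℝ) - 1/((n:ℝ)+1) := by
      have e : 1/(n:ℝ) - 1/((n:ℝ)+1) = 1/((n:ℝ)*((n:ℝ)+1)) := by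
        field_simp
        ring
      rw [e, div_pow, one_pow]
      apply one_div_le_one_div_of_le (by positivity)
      nlinarith
    push_cast
    push_cast at ih
    linarith

private lemma sq_sum {n : ℕ} : ∑ p ∈ Pr n, (1/(p:ℝ))^2 ≤ 1 := by
  rcases Nat.lt_or_ge n 2 with h | h
  · have : Pr n = ∅ := by
      rw [Finset.eq_empty_iff_forall_notMem]
      intro p hp
      have := mem_Pr.mp hp
      have := this.2.two_le
      omega
    simp [this]
  · have hsub : Pr n ⊆ Finset.Ico 2 (n+1) := by
      intro p hp
      have := mem_Pr.mp hp
      simp only [Finset.mem_Ico]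
      exact ⟨this.2.two_le, by omega⟩
    calc ∑ p ∈ Pr n, (1/(p:ℝ))^2 ≤ ∑ k ∈ Finset.Ico 2 (n+1), (1/(k:ℝ))^2 :=
          Finset.sum_le_sum_of_subset_of_nonneg hsub (fun k _ _ => by positivity)
      _ ≤ 1 - 1/(n:ℝ) := sq_sum_aux n (by omega)
      _ ≤ 1 := by
          have : (0:ℝ) < n := by positivity
          have : 0 ≤ 1/(n:ℝ) := by positivity
          linarith

private lemma neg_log_one_sub_le {x : ℝ} (hx : 0 < x) (hx2 : x ≤ 1/2) :
    Real.log (1 - x)⁻¹ ≤ x + 2*x^2 := by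
  have h1x : (0:ℝ) < 1 - x := by linarith
  rw [Real.log_inv]
  set t := x + 2*x^2 with ht
  have ht0 : 0 < t := by positivity
  have hexp : Real.exp (-t) ≤ 1 - x := by
    rw [Real.exp_neg]
    have h1 : 1 + t ≤ Real.exp t := by linarith [Real.add_one_le_exp t]
    have h2 : (Real.exp t)⁻¹ ≤ (1 + t)⁻¹ := by
      apply inv_anti₀ (by positivity) h1
    refine h2.trans ?_
    rw [inv_le_iff_one_le_mul₀ (by positivity)]
    nlinarith
  have := Real.log_le_log (Real.exp_pos _) hexp
  rw [Real.log_exp] at this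
  linarith

private lemma prod_bound {n : ℕ} (hn : 2 ≤ n) :
    ∏ p ∈ Pr n, (1 - 1/(p:ℝ))⁻¹ ≤ Real.exp 8 * Real.log n := by
  have hpos : ∀ p ∈ Pr n, (0:ℝ) < (1 - 1/(p:ℝ))⁻¹ := by
    intro p hp
    have h2 : (2:ℝ) ≤ p := by exact_mod_cast (mem_Pr.mp hp).2.two_le
    have : 1/(p:ℝ) ≤ 1/2 := by
      apply one_div_le_one_div_of_le (by norm_num) h2
    have : (0:ℝ) < 1 - 1/(p:ℝ) := by linarith
    positivity
  have hprod : ∏ p ∈ Pr n, (1 - 1/(p:ℝ))⁻¹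
      = Real.exp (∑ p ∈ Pr n, Real.log (1 - 1/(p:ℝ))⁻¹) := by
    rw [Real.exp_sum]
    exact Finset.prod_congr rfl fun p hp => (Real.exp_log (hpos p hp)).symm
  have hsum : ∑ p ∈ Pr n, Real.log (1 - 1/(p:ℝ))⁻¹
      ≤ Real.log (Real.log n) + 8 := by
    have hpt : ∀ p ∈ Pr n, Real.log (1 - 1/(p:ℝ))⁻¹ ≤ 1/(p:ℝ) + 2*(1/(p:ℝ))^2 := by
      intro p hp
      have h2 : (2:ℝ) ≤ p := by exact_mod_cast (mem_Pr.mp hp).2.two_le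
      refine neg_log_one_sub_le (by positivity) ?_
      apply one_div_le_one_div_of_le (by norm_num) h2
    calc ∑ p ∈ Pr n, Real.log (1 - 1/(p:ℝ))⁻¹
        ≤ ∑ p ∈ Pr n, (1/(p:ℝ) + 2*(1/(p:ℝ))^2) := Finset.sum_le_sum hpt
      _ = (∑ p ∈ Pr n, 1/(p:ℝ)) + 2 * ∑ p ∈ Pr n, (1/(p:ℝ))^2 := by
          rw [Finset.sum_add_distrib, Finset.mul_sum]
      _ ≤ (Real.log (Real.log n) + 6) + 2 * 1 := by
          have := mertens2 hn
          have := sq_sum (n := n)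
          have h2 : 2 * ∑ p ∈ Pr n, (1/(p:ℝ))^2 ≤ 2 * 1 := by linarith
          linarith
      _ = Real.log (Real.log n) + 8 := by ring
  have hn2 : (2:ℝ) ≤ (n:ℝ) := by exact_mod_cast hn
  have hln0 : 0 < Real.log n :=
    Real.log_pos (by linarith)
  calc ∏ p ∈ Pr n, (1 - 1/(p:ℝ))⁻¹
      = Real.exp (∑ p ∈ Pr n, Real.log (1 - 1/(p:ℝ))⁻¹) := hprod
    _ ≤ Real.exp (Real.log (Real.log n) + 8) := Real.exp_le_exp.mpr (by linarith [hsum])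
    _ = Real.log n * Real.exp 8 := by
        rw [Real.exp_add, Real.exp_log hln0]
    _ = Real.exp 8 * Real.log n := by ring

private lemma part1 (y : ℝ) (hy : 2 ≤ y) :
    (∑' j : {j : ℕ // 0 < j ∧ ∀ p : ℕ, p.Prime → p ∣ j → (p : ℝ) ≤ y},
        (1 : ℝ) / ((j : ℕ) : ℝ)) =
      ∏ p ∈ (Finset.range (⌊y⌋₊ + 1)).filter Nat.Prime, (1 - 1 / (p : ℝ))⁻¹ := by
  have hy0 : (0:ℝ) ≤ y := le_trans (by norm_num) hy
  set N := ⌊y⌋₊ + 1 with hN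
  set f : ℕ → ℝ := fun n => (n : ℝ)⁻¹ with hf
  have hf₁ : f 1 = 1 := by simp [hf]
  have hmul : ∀ {m n : ℕ}, Nat.Coprime m n → f (m * n) = f m * f n := by
    intro m n _; simp [hf, mul_inv, mul_comm]
  have hsum : ∀ {p : ℕ}, p.Prime → Summable (fun n : ℕ ↦ ‖f (p ^ n)‖) := by
    intro p hp
    have h1 : ((p:ℝ))⁻¹ < 1 := by
      rw [inv_lt_one_iff₀]; right; exact_mod_cast hp.one_lt
    have h0 : (0:ℝ) ≤ (p:ℝ)⁻¹ := by positivity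
    have := summable_geometric_of_lt_one h0 h1
    refine this.congr fun n => ?_
    rw [hf]
    push_cast
    rw [← inv_pow, Real.norm_eq_abs, abs_of_nonneg (by positivity)]
  have key := (EulerProduct.summable_and_hasSum_smoothNumbers_prod_primesBelow_tsum
    hf₁ hmul hsum N).2.tsum_eq
  have hset : {j : ℕ | 0 < j ∧ ∀ p : ℕ, p.Prime → p ∣ j → (p : ℝ) ≤ y} = N.smoothNumbers := by
    ext j
    simp only [Set.mem_setOf_eq, Nat.mem_smoothNumbers]
    constructor
    · rintro ⟨hj, h⟩
      refine ⟨hj.ne', fun p hp => ?_⟩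
      rw [Nat.mem_primeFactorsList hj.ne'] at hp
      have := h p hp.1 hp.2
      have : p ≤ ⌊y⌋₊ := Nat.le_floor this
      omega
    · rintro ⟨hj, h⟩
      refine ⟨Nat.pos_of_ne_zero hj, fun p hp hpj => ?_⟩
      have := h p ((Nat.mem_primeFactorsList hj).mpr ⟨hp, hpj⟩)
      have hp' : p ≤ ⌊y⌋₊ := by omega
      calc (p:ℝ) ≤ (⌊y⌋₊ : ℝ) := by exact_mod_cast hp'
        _ ≤ y := Nat.floor_le hy0
  have heq : (∑' j : {j : ℕ // 0 < j ∧ ∀ p : ℕ, p.Prime → p ∣ j → (p : ℝ) ≤ y},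
        (1 : ℝ) / ((j : ℕ) : ℝ)) = ∑' m : N.smoothNumbers, f m := by
    rw [← (Equiv.setCongr hset).tsum_eq (fun m : ↥N.smoothNumbers => f ↑m)]
    exact tsum_congr fun j => by rw [one_div]; rfl
  rw [heq, key]
  rw [show N.primesBelow = (Finset.range N).filter Nat.Prime from rfl]
  refine Finset.prod_congr rfl fun p hp => ?_
  have hp' : p.Prime := (Finset.mem_filter.mp hp).2
  have h1 : ((p:ℝ))⁻¹ < 1 := by
    rw [inv_lt_one_iff₀]; right; exact_mod_cast hp'.one_lt
  have h0 : (0:ℝ) ≤ (p:ℝ)⁻¹ := by positivity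
  have := tsum_geometric_of_lt_one h0 h1
  rw [one_div, ← this]
  refine tsum_congr fun n => ?_
  rw [hf]; push_cast; rw [← inv_pow]

theorem smooth_harmonic_sum :
    (∀ y : ℝ, 2 ≤ y →
      (∑' j : {j : ℕ // 0 < j ∧ ∀ p : ℕ, p.Prime → p ∣ j → (p : ℝ) ≤ y},
          (1 : ℝ) / ((j : ℕ) : ℝ)) =
        ∏ p ∈ (Finset.range (⌊y⌋₊ + 1)).filter Nat.Prime, (1 - 1 / (p : ℝ))⁻¹) ∧
    ∃ C : ℝ, 0 < C ∧ ∀ y : ℝ, 2 ≤ y →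
      (∑' j : {j : ℕ // 0 < j ∧ ∀ p : ℕ, p.Prime → p ∣ j → (p : ℝ) ≤ y},
          (1 : ℝ) / ((j : ℕ) : ℝ)) ≤ C * Real.log y := by
  constructor
  · exact part1
  · refine ⟨Real.exp 8, Real.exp_pos 8, fun y hy => ?_⟩
    rw [part1 y hy]
    have hy0 : (0:ℝ) ≤ y := by linarith
    have hn : 2 ≤ ⌊y⌋₊ := Nat.le_floor (by exact_mod_cast hy)
    have hfl : (0:ℝ) < (⌊y⌋₊ : ℝ) := by exact_mod_cast (by omega : 0 < ⌊y⌋₊)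
    have hly : Real.log (⌊y⌋₊ : ℝ) ≤ Real.log y :=
      Real.log_le_log hfl (Nat.floor_le hy0)
    calc ∏ p ∈ (Finset.range (⌊y⌋₊ + 1)).filter Nat.Prime, (1 - 1 / (p : ℝ))⁻¹
        = ∏ p ∈ Pr ⌊y⌋₊, (1 - 1/(p:ℝ))⁻¹ := rfl
      _ ≤ Real.exp 8 * Real.log ⌊y⌋₊ := prod_bound hn
      _ ≤ Real.exp 8 * Real.log y := by
          have := Real.exp_pos (8:ℝ)
          nlinarith
end

section
/- For a prime p, a real α with 1/2 < α ≤ 1, and a positive integer ℓ, define E_ℓ(p, α) := (1/2π) ∫_{−π}^{π} |1 − e^{iθ} p^{−α}|^{−2ℓ} dθ. Then for each fixed α with 1/2 < α < 1 there exists a constant C(α) > 0, depending only on α, such that for every integer ℓ ≥ 3, the series Σ_p log E_ℓ(p, α) over all primes converges and satisfies Σ_p log E_ℓ(p, α) ≤ C(α) · ℓ^{1/α} / log ℓ. -/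
open Real

/-- `E ℓ p α = (1/2π) ∫_{-π}^{π} |1 - e^{iθ} p^{-α}|^{-2ℓ} dθ`, the `2ℓ`-th absolute moment
of `(1 - X(p)/p^α)⁻¹` where `X(p)` is uniform on the unit circle. -/
noncomputable def momentFactor (ℓ : ℕ) (p : ℕ) (α : ℝ) : ℝ :=
  (1 / (2 * π)) *
    ∫ θ in (-π)..π,
      (‖(1 : ℂ) - Complex.exp (Complex.I * θ) * (((p : ℝ) ^ (-α) : ℝ) : ℂ)‖ ^ (2 * ℓ))⁻¹

set_option maxHeartbeats 1000000

lemma normsq_eq (r θ : ℝ) :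
    ‖(1:ℂ) - Complex.exp (Complex.I * θ) * (r:ℂ)‖ ^ 2 = 1 - 2*r*Real.cos θ + r^2 := by
  rw [mul_comm Complex.I (θ:ℂ), Complex.exp_mul_I]
  rw [Complex.sq_norm, Complex.normSq_apply]
  simp [Complex.cos_ofReal_re, Complex.sin_ofReal_re]
  nlinarith [Real.sin_sq_add_cos_sq θ]

/-- the integral appearing in momentFactor, in real form -/
noncomputable def Iint (ℓ : ℕ) (r : ℝ) : ℝ :=
  ∫ θ in (-π)..π, ((1 - 2*r*Real.cos θ + r^2)^ℓ)⁻¹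

lemma g_pos {r : ℝ} (h0 : 0 ≤ r) (h1 : r < 1) (θ : ℝ) :
    0 < 1 - 2*r*Real.cos θ + r^2 := by
  nlinarith [Real.cos_le_one θ, Real.neg_one_le_cos θ, sq_nonneg (1-r)]

lemma mF_eq (ℓ p : ℕ) (α : ℝ) : momentFactor ℓ p α = (1/(2*π)) * Iint ℓ ((p:ℝ)^(-α)) := by
  unfold momentFactor Iint
  congr 1
  refine intervalIntegral.integral_congr (fun θ _ => ?_)
  rw [pow_mul, normsq_eq]

lemma integrand_cont {r : ℝ} (h0 : 0 ≤ r) (h1 : r < 1) (ℓ : ℕ) :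
    Continuous (fun θ : ℝ => ((1 - 2*r*Real.cos θ + r^2)^ℓ)⁻¹) := by
  refine Continuous.inv₀ (by continuity) (fun θ => ?_)
  exact pow_ne_zero _ (ne_of_gt (g_pos h0 h1 θ))

lemma integral_affine_cos (a b : ℝ) : (∫ θ in (-π)..π, (b + a * Real.cos θ)) = 2*π*b := by
  rw [intervalIntegral.integral_add (f := fun _ => b) (g := fun θ => a * Real.cos θ) intervalIntegrable_const
    ((continuous_const.mul Real.continuous_cos).intervalIntegrable _ _)]
  rw [intervalIntegral.integral_const_mul, integral_cos, intervalIntegral.integral_const,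
    Real.sin_neg, Real.sin_pi, smul_eq_mul]
  ring

lemma Iint_le {r : ℝ} (h0 : 0 ≤ r) (h1 : r < 1) (ℓ : ℕ) {A B : ℝ}
    (h : ∀ θ ∈ Set.Icc (-π) π, ((1 - 2*r*Real.cos θ + r^2)^ℓ)⁻¹ ≤ B + A * Real.cos θ) :
    Iint ℓ r ≤ 2*π*B := by
  have hpi : -π ≤ π := by linarith [Real.pi_pos]
  have := intervalIntegral.integral_mono_on (μ := MeasureTheory.volume) hpi
    ((integrand_cont h0 h1 ℓ).intervalIntegrable _ _)
    ((continuous_const.add (continuous_const.mul Real.continuous_cos)).intervalIntegrable _ _) h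
  calc Iint ℓ r ≤ _ := this
  _ = 2*π*B := integral_affine_cos A B

lemma le_Iint {r : ℝ} (h0 : 0 ≤ r) (h1 : r < 1) (ℓ : ℕ) {A B : ℝ}
    (h : ∀ θ ∈ Set.Icc (-π) π, B + A * Real.cos θ ≤ ((1 - 2*r*Real.cos θ + r^2)^ℓ)⁻¹) :
    2*π*B ≤ Iint ℓ r := by
  have hpi : -π ≤ π := by linarith [Real.pi_pos]
  have := intervalIntegral.integral_mono_on (μ := MeasureTheory.volume) hpi
    ((continuous_const.add (continuous_const.mul Real.continuous_cos)).intervalIntegrable _ _)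
    ((integrand_cont h0 h1 ℓ).intervalIntegrable _ _) h
  calc 2*π*B = _ := (integral_affine_cos A B).symm
  _ ≤ Iint ℓ r := this

lemma inv_pow_eq_exp {g : ℝ} (hg : 0 < g) (ℓ : ℕ) :
    (g^ℓ)⁻¹ = Real.exp (-(ℓ * Real.log g)) := by
  rw [Real.exp_neg]
  congr 1
  rw [← Real.log_pow, Real.exp_log (pow_pos hg ℓ)]

lemma Iint_le_one {r : ℝ} (h0 : 0 ≤ r) (h1 : r < 1) (ℓ : ℕ) :
    Iint ℓ r ≤ 2*π*(((1-r)^2)^ℓ)⁻¹ := by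
  refine Iint_le h0 h1 ℓ (A := 0) (fun θ _ => ?_)
  rw [zero_mul, add_zero]
  refine inv_anti₀ (pow_pos (by nlinarith) ℓ) (pow_le_pow_left₀ (by positivity) ?_ ℓ)
  nlinarith [Real.cos_le_one θ]

lemma le_Iint_exp {r : ℝ} (h0 : 0 ≤ r) (h1 : r < 1) (ℓ : ℕ) :
    2*π*Real.exp (-(ℓ*r^2)) ≤ Iint ℓ r := by
  refine le_Iint h0 h1 ℓ (A := Real.exp (-(ℓ*r^2)) * (2*ℓ*r)) (fun θ hθ => ?_)
  set g : ℝ := 1 - 2*r*Real.cos θ + r^2 with hgdef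
  have hg : 0 < g := g_pos h0 h1 θ
  rw [inv_pow_eq_exp hg ℓ]
  have hlog : Real.log g ≤ g - 1 := Real.log_le_sub_one_of_pos hg
  have h2 : -(ℓ * Real.log g) ≥ -(ℓ*r^2) + (2*ℓ*r*Real.cos θ) := by
    have : Real.log g ≤ -(2*r*Real.cos θ - r^2) := by rw [hgdef]; linarith
    have hℓ0 : (0:ℝ) ≤ ℓ := Nat.cast_nonneg ℓ
    nlinarith [mul_le_mul_of_nonneg_left this hℓ0]
  calc Real.exp (-(ℓ*r^2)) + Real.exp (-(ℓ*r^2)) * (2*ℓ*r) * Real.cos θ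
      = Real.exp (-(ℓ*r^2)) * (1 + 2*ℓ*r*Real.cos θ) := by ring
    _ ≤ Real.exp (-(ℓ*r^2)) * Real.exp (2*ℓ*r*Real.cos θ) := by
        refine mul_le_mul_of_nonneg_left ?_ (Real.exp_pos _).le
        linarith [Real.add_one_le_exp (2*ℓ*r*Real.cos θ)]
    _ = Real.exp (-(ℓ*r^2) + 2*ℓ*r*Real.cos θ) := (Real.exp_add _ _).symm
    _ ≤ Real.exp (-(ℓ * Real.log g)) := Real.exp_le_exp.2 (by linarith)

lemma exp_quad_bound {t : ℝ} (ht : |t| ≤ 1) : Real.exp t ≤ 1 + t + (3/4)*t^2 := by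
  have h := Real.exp_bound ht (n := 2) (by norm_num)
  have hsum : (∑ m ∈ Finset.range 2, t ^ m / (m.factorial : ℝ)) = 1 + t := by
    simp [Finset.sum_range_succ]
  rw [hsum] at h
  have h2 : |t|^2 * ((2:ℕ).succ / ((2:ℕ).factorial * (2:ℕ) : ℝ)) = (3/4)*t^2 := by
    rw [sq_abs]; norm_num; ring
  rw [h2] at h
  have := abs_le.1 h
  linarith [this.2]

lemma key_pointwise {r c : ℝ} {ℓ : ℕ} (hℓ : 3 ≤ ℓ) (h0 : 0 ≤ r) (hsm : 2*(ℓ:ℝ)*r ≤ 1)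
    (hc1 : c ≤ 1) (hcm : -1 ≤ c) :
    ((1 - 2*r*c + r^2)^ℓ)⁻¹ ≤
      Real.exp (9*ℓ*r^2) * (1 + 3*(ℓ:ℝ)^2*r^2) + Real.exp (9*ℓ*r^2) * (2*ℓ*r) * c := by
  have hℓ0 : (0:ℝ) ≤ ℓ := Nat.cast_nonneg ℓ
  have hℓ6 : (6:ℝ) ≤ 2*ℓ := by
    have : (3:ℝ) ≤ ℓ := by exact_mod_cast hℓ
    linarith
  have hr6 : r ≤ 1/6 := by nlinarith
  have hrc_hi : 2*r*c ≤ 2*r := by nlinarith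
  have hrc_lo : -(2*r) ≤ 2*r*c := by nlinarith
  have hr2 : r^2 ≤ (1/6)*r := by nlinarith
  obtain ⟨y, hy⟩ : ∃ y : ℝ, y = 2*r*c - r^2 := ⟨_, rfl⟩
  have hgy : (1 : ℝ) - 2*r*c + r^2 = 1 - y := by rw [hy]; ring
  have hyhi : y ≤ 1/3 := by rw [hy]; nlinarith
  have hylo : -(1/2) ≤ y := by rw [hy]; nlinarith
  have h1y : 0 < 1 - y := by linarith
  have hg : 0 < 1 - 2*r*c + r^2 := by rw [hgy]; exact h1y
  rw [inv_pow_eq_exp hg ℓ, hgy]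
  -- log (1-y) ≥ -y - 2y²
  have hlog : -y - 2*y^2 ≤ Real.log (1-y) := by
    have hginv := Real.log_le_sub_one_of_pos (inv_pos.2 h1y)
    rw [Real.log_inv] at hginv
    have hkey : (1-y)⁻¹ ≤ 1 + y + 2*y^2 := by
      rw [inv_le_iff_one_le_mul₀ h1y]
      nlinarith [mul_nonneg (sq_nonneg y) (by linarith : (0:ℝ) ≤ 1 - 2*y)]
    linarith
  have hy2 : y^2 ≤ 5*r^2 := by
    have h' : y ≤ (13/6)*r := by rw [hy]; linarith [sq_nonneg r]
    have h'' : -((13/6)*r) ≤ y := by rw [hy]; linarith [sq_nonneg r]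
    have := sq_le_sq' h'' h'
    nlinarith [sq_nonneg r]
  have hstep : -((ℓ:ℝ) * Real.log (1-y)) ≤ 9*ℓ*r^2 + 2*ℓ*r*c := by
    have h1 : -Real.log (1-y) ≤ y + 2*y^2 := by linarith
    have h2 : (ℓ:ℝ) * (-Real.log (1-y)) ≤ (ℓ:ℝ) * (y + 2*y^2) :=
      mul_le_mul_of_nonneg_left h1 hℓ0
    have h3 : (ℓ:ℝ) * (y + 2*y^2) ≤ (ℓ:ℝ) * (2*r*c - r^2 + 10*r^2) :=
      mul_le_mul_of_nonneg_left (by rw [hy] at hy2 ⊢; linarith) hℓ0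
    linarith [h2, h3]
  have hc2 : c^2 ≤ 1 := by nlinarith
  have habs : |2*(ℓ:ℝ)*r*c| ≤ 1 := by
    have hpos : (0:ℝ) ≤ 2*(ℓ:ℝ)*r := by positivity
    have h1 : |2*(ℓ:ℝ)*r*c| = (2*(ℓ:ℝ)*r)*|c| := by
      rw [abs_mul, abs_of_nonneg hpos]
    have h2 : |c| ≤ 1 := abs_le.2 ⟨hcm, hc1⟩
    rw [h1]
    calc (2*(ℓ:ℝ)*r)*|c| ≤ (2*(ℓ:ℝ)*r)*1 := mul_le_mul_of_nonneg_left h2 hpos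
      _ ≤ 1 := by linarith
  have hq : (3/4)*(2*(ℓ:ℝ)*r*c)^2 ≤ 3*(ℓ:ℝ)^2*r^2 := by
    have h1 : (3/4)*(2*(ℓ:ℝ)*r*c)^2 = 3*(((ℓ:ℝ)*r)^2*c^2) := by ring
    have h2 : ((ℓ:ℝ)*r)^2*c^2 ≤ ((ℓ:ℝ)*r)^2*1 :=
      mul_le_mul_of_nonneg_left hc2 (sq_nonneg _)
    nlinarith [h1, h2]
  calc Real.exp (-((ℓ:ℝ) * Real.log (1-y)))
      ≤ Real.exp (9*ℓ*r^2 + 2*ℓ*r*c) := Real.exp_le_exp.2 hstep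
    _ = Real.exp (9*ℓ*r^2) * Real.exp (2*ℓ*r*c) := Real.exp_add _ _
    _ ≤ Real.exp (9*ℓ*r^2) * (1 + 3*(ℓ:ℝ)^2*r^2) + Real.exp (9*ℓ*r^2) * (2*ℓ*r) * c := by
        have h5 := exp_quad_bound habs
        have hE := (Real.exp_pos (9*(ℓ:ℝ)*r^2)).le
        have h6 : Real.exp (9*(ℓ:ℝ)*r^2) * Real.exp (2*(ℓ:ℝ)*r*c) ≤
            Real.exp (9*(ℓ:ℝ)*r^2) * (1 + 2*(ℓ:ℝ)*r*c + (3/4)*(2*(ℓ:ℝ)*r*c)^2) :=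
          mul_le_mul_of_nonneg_left h5 hE
        have h7 := mul_le_mul_of_nonneg_left hq hE
        linarith [h6, h7]

lemma Iint_le_exp {r : ℝ} {ℓ : ℕ} (hℓ : 3 ≤ ℓ) (h0 : 0 ≤ r) (hsm : 2*(ℓ:ℝ)*r ≤ 1) :
    Iint ℓ r ≤ 2*π*(Real.exp (9*ℓ*r^2) * (1 + 3*(ℓ:ℝ)^2*r^2)) := by
  have hℓ6 : (6:ℝ) ≤ 2*ℓ := by
    have : (3:ℝ) ≤ ℓ := by exact_mod_cast hℓ
    linarith
  have h1 : r < 1 := by nlinarith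
  exact Iint_le h0 h1 ℓ (fun θ _ =>
    key_pointwise hℓ h0 hsm (Real.cos_le_one θ) (Real.neg_one_le_cos θ))

lemma mF_ge {r : ℝ} (h0 : 0 ≤ r) (h1 : r < 1) (ℓ : ℕ) :
    Real.exp (-(ℓ*r^2)) ≤ (1/(2*π)) * Iint ℓ r := by
  have hπ : (0:ℝ) < 2*π := by positivity
  have h := le_Iint_exp h0 h1 ℓ
  calc Real.exp (-(ℓ*r^2)) = (1/(2*π)) * (2*π*Real.exp (-(ℓ*r^2))) := by field_simp
    _ ≤ (1/(2*π)) * Iint ℓ r := mul_le_mul_of_nonneg_left h (by positivity)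

lemma mF_pos {r : ℝ} (h0 : 0 ≤ r) (h1 : r < 1) (ℓ : ℕ) :
    0 < (1/(2*π)) * Iint ℓ r :=
  lt_of_lt_of_le (Real.exp_pos _) (mF_ge h0 h1 ℓ)

lemma log_mF_lower {r : ℝ} (h0 : 0 ≤ r) (h1 : r < 1) (ℓ : ℕ) :
    -(ℓ*r^2) ≤ Real.log ((1/(2*π)) * Iint ℓ r) := by
  have := Real.log_le_log (Real.exp_pos _) (mF_ge h0 h1 ℓ)
  rwa [Real.log_exp] at this

lemma log_mF_small {r : ℝ} (h0 : 0 ≤ r) (h34 : r ≤ 3/4) (ℓ : ℕ) :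
    Real.log ((1/(2*π)) * Iint ℓ r) ≤ 8*ℓ*r := by
  have h1 : r < 1 := by linarith
  have hπ : (0:ℝ) < 2*π := by positivity
  have h1r : (0:ℝ) < 1 - r := by linarith
  have hM : (1/(2*π)) * Iint ℓ r ≤ (((1-r)^2)^ℓ)⁻¹ := by
    have h := Iint_le_one h0 h1 ℓ
    calc (1/(2*π)) * Iint ℓ r ≤ (1/(2*π)) * (2*π*(((1-r)^2)^ℓ)⁻¹) :=
          mul_le_mul_of_nonneg_left h (by positivity)
      _ = (((1-r)^2)^ℓ)⁻¹ := by field_simp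
  have hlog := Real.log_le_log (mF_pos h0 h1 ℓ) hM
  have hQ : Real.log ((((1-r)^2)^ℓ)⁻¹) = -((ℓ:ℝ) * (2 * Real.log (1-r))) := by
    rw [Real.log_inv, Real.log_pow, Real.log_pow]
    norm_num
  rw [hQ] at hlog
  -- -log(1-r) ≤ 4r
  have hl4 : -Real.log (1-r) ≤ 4*r := by
    have hginv := Real.log_le_sub_one_of_pos (inv_pos.2 h1r)
    rw [Real.log_inv] at hginv
    have : (1-r)⁻¹ ≤ 1 + 4*r := by
      rw [inv_le_iff_one_le_mul₀ h1r]
      nlinarith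
    linarith
  have hℓ0 : (0:ℝ) ≤ ℓ := Nat.cast_nonneg ℓ
  have := mul_le_mul_of_nonneg_left hl4 hℓ0
  nlinarith [this, hlog]

lemma log_mF_large {r : ℝ} {ℓ : ℕ} (hℓ : 3 ≤ ℓ) (h0 : 0 ≤ r) (hsm : 2*(ℓ:ℝ)*r ≤ 1) :
    Real.log ((1/(2*π)) * Iint ℓ r) ≤ 12*(ℓ:ℝ)^2*r^2 := by
  have hℓ6 : (6:ℝ) ≤ 2*ℓ := by
    have : (3:ℝ) ≤ ℓ := by exact_mod_cast hℓ
    linarith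
  have h1 : r < 1 := by nlinarith
  have hπ : (0:ℝ) < 2*π := by positivity
  have hM : (1/(2*π)) * Iint ℓ r ≤ Real.exp (9*ℓ*r^2) * (1 + 3*(ℓ:ℝ)^2*r^2) := by
    have h := Iint_le_exp hℓ h0 hsm
    calc (1/(2*π)) * Iint ℓ r
        ≤ (1/(2*π)) * (2*π*(Real.exp (9*ℓ*r^2) * (1 + 3*(ℓ:ℝ)^2*r^2))) :=
          mul_le_mul_of_nonneg_left h (by positivity)
      _ = Real.exp (9*ℓ*r^2) * (1 + 3*(ℓ:ℝ)^2*r^2) := by field_simp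
  have hlog := Real.log_le_log (mF_pos h0 h1 ℓ) hM
  have h1p : (0:ℝ) < 1 + 3*(ℓ:ℝ)^2*r^2 := by positivity
  rw [Real.log_mul (Real.exp_pos _).ne' h1p.ne', Real.log_exp] at hlog
  have h2 : Real.log (1 + 3*(ℓ:ℝ)^2*r^2) ≤ 3*(ℓ:ℝ)^2*r^2 := by
    have := Real.log_le_sub_one_of_pos h1p
    linarith
  have hℓ2 : (ℓ:ℝ) ≤ (ℓ:ℝ)^2 := by nlinarith
  nlinarith [hlog, h2, sq_nonneg r, sq_nonneg ((ℓ:ℝ)*r)]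


/-- Chebyshev-type bound: the number of primes in `[2^j, 2^(j+1))` is at most `2^(j+3)/(j+1)`. -/
lemma prime_block_count (j : ℕ) :
    (((Finset.Ico (2^j) (2^(j+1))).filter Nat.Prime).card : ℝ) * (j+1) ≤ 2^(j+3) := by
  set S := (Finset.Ico (2^j) (2^(j+1))).filter Nat.Prime with hS
  have hnat : S.card * (j+1) ≤ 2^(j+3) := by
    rcases Nat.eq_zero_or_pos j with hj | hj
    · subst hj
      have : S.card ≤ 1 := by
        calc S.card ≤ (Finset.Ico (2^0) (2^1)).card := Finset.card_le_card (Finset.filter_subset _ _)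
          _ = 1 := by simp
      omega
    -- j ≥ 1
    have h1 : (2^j)^S.card ≤ ∏ p ∈ S, p := by
      refine Finset.pow_card_le_prod S _ _ (fun p hp => ?_)
      exact (Finset.mem_Ico.1 (Finset.mem_filter.1 hp).1).1
    have h2 : (∏ p ∈ S, p) ≤ primorial (2^(j+1)) := by
      unfold primorial
      refine Finset.prod_le_prod_of_subset_of_one_le' ?_ (fun i hi _ => ?_)
      · intro p hp
        rw [Finset.mem_filter] at hp ⊢
        refine ⟨Finset.mem_range.2 ?_, hp.2⟩
        have := (Finset.mem_Ico.1 hp.1).2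
        omega
      · exact (Finset.mem_filter.1 hi).2.one_lt.le
    have h3 : primorial (2^(j+1)) ≤ 4^(2^(j+1)) := primorial_le_4_pow _
    have h4 : (2:ℕ)^(j * S.card) ≤ 2^(2^(j+2)) := by
      calc (2:ℕ)^(j * S.card) = (2^j)^S.card := by rw [pow_mul]
        _ ≤ 4^(2^(j+1)) := le_trans h1 (le_trans h2 h3)
        _ = 2^(2^(j+2)) := by
            rw [show (4:ℕ) = 2^2 by norm_num, ← pow_mul]
            congr 1
            rw [pow_succ]
            ring
    have h5 : j * S.card ≤ 2^(j+2) := (Nat.pow_le_pow_iff_right (by norm_num)).1 h4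
    have h6 : S.card ≤ j * S.card := Nat.le_mul_of_pos_left _ hj
    calc S.card * (j+1) = j * S.card + S.card := by ring
      _ ≤ 2^(j+2) + 2^(j+2) := Nat.add_le_add h5 (le_trans h6 h5)
      _ = 2^(j+3) := by ring
  calc (S.card : ℝ) * (j+1) = ((S.card * (j+1) : ℕ) : ℝ) := by push_cast; ring
    _ ≤ ((2^(j+3) : ℕ) : ℝ) := by exact_mod_cast hnat
    _ = 2^(j+3) := by push_cast; ring

/-- bound for the weighted sum over one dyadic block -/
lemma block_sum_le {β : ℝ} (hβ : 0 ≤ β) (w : ℕ → ℝ) (hw0 : ∀ n, 0 ≤ w n)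
    (hwP : ∀ n, w n ≠ 0 → n.Prime) (hwle : ∀ n, w n ≤ (n:ℝ)^(-β)) (j : ℕ) :
    (∑ n ∈ Finset.Ico (2^j) (2^(j+1)), w n) ≤
      (2^(j+3)/(j+1)) * ((2:ℝ)^j)^(-β) := by
  have hb : (0:ℝ) < ((2:ℝ)^j)^(-β) := Real.rpow_pos_of_pos (by positivity) _
  have hstep : ∀ n ∈ (Finset.Ico (2^j) (2^(j+1))).filter Nat.Prime, w n ≤ ((2:ℝ)^j)^(-β) := by
    intro n hn
    have h1 : 2^j ≤ n := (Finset.mem_Ico.1 (Finset.mem_filter.1 hn).1).1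
    have h2 : ((2:ℝ)^j) ≤ (n:ℝ) := by exact_mod_cast h1
    calc w n ≤ (n:ℝ)^(-β) := hwle n
      _ ≤ ((2:ℝ)^j)^(-β) :=
        Real.rpow_le_rpow_of_nonpos (by positivity) h2 (by linarith)
  have hsum : (∑ n ∈ Finset.Ico (2^j) (2^(j+1)), w n)
      = ∑ n ∈ (Finset.Ico (2^j) (2^(j+1))).filter Nat.Prime, w n :=
    (Finset.sum_filter_of_ne (fun n _ hn => hwP n hn)).symm
  rw [hsum]
  have hcard := prime_block_count j
  have hj1 : (0:ℝ) < (j:ℝ)+1 := by positivity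
  calc (∑ n ∈ (Finset.Ico (2^j) (2^(j+1))).filter Nat.Prime, w n)
      ≤ (((Finset.Ico (2^j) (2^(j+1))).filter Nat.Prime).card : ℝ) * ((2:ℝ)^j)^(-β) := by
        have := Finset.sum_le_card_nsmul _ _ _ hstep
        rwa [nsmul_eq_mul] at this
    _ ≤ (2^(j+3)/(j+1)) * ((2:ℝ)^j)^(-β) := by
        refine mul_le_mul_of_nonneg_right ?_ hb.le
        rw [le_div_iff₀ hj1]
        exact hcard

/-- dyadic decomposition of a sum -/
lemma sum_dyadic (f : ℕ → ℝ) (a : ℕ) : ∀ b, a ≤ b →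
    (∑ n ∈ Finset.Ico (2^a) (2^b), f n) =
      ∑ j ∈ Finset.Ico a b, (∑ n ∈ Finset.Ico (2^j) (2^(j+1)), f n) := by
  refine Nat.le_induction ?_ ?_
  · simp
  · intro b hab ih
    have h1 : (2:ℕ)^a ≤ 2^b := Nat.pow_le_pow_right (by norm_num) hab
    have h2 : (2:ℕ)^b ≤ 2^(b+1) := Nat.pow_le_pow_right (by norm_num) (by omega)
    rw [← Finset.sum_Ico_consecutive f h1 h2, ih, Finset.sum_Ico_succ_top hab]

lemma summable_lin_geo {q : ℝ} (hq0 : 0 ≤ q) (hq1 : q < 1) :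
    Summable (fun m : ℕ => ((m:ℝ)+1)*q^m) := by
  have h1 : Summable (fun m : ℕ => ((m:ℝ))^1*q^m) :=
    summable_pow_mul_geometric_of_norm_lt_one 1 (by rw [Real.norm_eq_abs, abs_of_nonneg hq0]; exact hq1)
  have h2 : Summable (fun m : ℕ => q^m) := summable_geometric_of_lt_one hq0 hq1
  exact (h1.add h2).congr (fun m => by ring)

lemma primes_partial_sum_le {w : ℕ → ℝ} (hw0 : ∀ n, 0 ≤ w n)
    {a b : ℕ} (hab : a ≤ b) (s : Finset Nat.Primes)
    (hsupp : ∀ p : Nat.Primes, p ∈ s → w (p:ℕ) ≠ 0 → 2^a ≤ (p:ℕ) ∧ (p:ℕ) < 2^b) :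
    (∑ p ∈ s, w (p:ℕ)) ≤ ∑ j ∈ Finset.Ico a b, (∑ n ∈ Finset.Ico (2^j) (2^(j+1)), w n) := by
  rw [← sum_dyadic w a b hab]
  have hinj : ∀ x ∈ s, ∀ y ∈ s, (x:ℕ) = (y:ℕ) → x = y := fun x _ y _ h => Subtype.ext h
  rw [← Finset.sum_image (g := fun p : Nat.Primes => (p:ℕ)) (f := w) hinj]
  rw [← Finset.sum_filter_of_ne (p := fun n => n ∈ Finset.Ico (2^a) (2^b))
    (fun n hn hwn => by
      obtain ⟨p, hp, rfl⟩ := Finset.mem_image.1 hn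
      exact Finset.mem_Ico.2 (hsupp p hp hwn))]
  exact Finset.sum_le_sum_of_subset_of_nonneg (fun n hn => (Finset.mem_filter.1 hn).2)
    (fun i _ _ => hw0 i)

lemma term_le_A {β : ℝ} (hβ0 : 0 < β) (hβ1 : β < 1) {j J : ℕ} (hj : j ≤ J) :
    (2:ℝ)^(j+3)/((j:ℝ)+1) * ((2:ℝ)^j)^(-β) ≤
      (8 * (((J-j:ℕ):ℝ)+1) * ((2:ℝ)^(β-1))^(J-j)) * (((2:ℝ)^J)^((1:ℝ)-β) / ((J:ℝ)+1)) := by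
  have h2 : (0:ℝ) < 2 := by norm_num
  have hm : ((J-j:ℕ):ℝ) = (J:ℝ) - (j:ℝ) := by
    rw [Nat.cast_sub hj]
  have e1 : ((2:ℝ)^j)^(-β) = (2:ℝ)^(((j:ℝ))*(-β)) := by
    rw [← Real.rpow_natCast 2 j, ← Real.rpow_mul (by norm_num)]
  have e2 : ((2:ℝ)^J)^((1:ℝ)-β) = (2:ℝ)^(((J:ℝ))*(1-β)) := by
    rw [← Real.rpow_natCast 2 J, ← Real.rpow_mul (by norm_num)]
  have e3 : ((2:ℝ)^(β-1))^(J-j) = (2:ℝ)^((β-1)*((J-j:ℕ):ℝ)) := by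
    rw [Real.rpow_mul (by norm_num), Real.rpow_natCast]
  have e4 : (2:ℝ)^(j+3) = 8 * (2:ℝ)^((j:ℝ)) := by
    rw [Real.rpow_natCast, pow_add]
    norm_num
    ring
  rw [e1, e2, e3, e4]
  have e5 : (2:ℝ)^((β-1)*((J-j:ℕ):ℝ)) * (2:ℝ)^(((J:ℝ))*(1-β)) = (2:ℝ)^(((j:ℝ))*(1-β)) := by
    rw [← Real.rpow_add h2]
    congr 1
    rw [hm]
    ring
  have e6 : (2:ℝ)^((j:ℝ)) * (2:ℝ)^(((j:ℝ))*(-β)) = (2:ℝ)^(((j:ℝ))*(1-β)) := by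
    rw [← Real.rpow_add h2]
    congr 1
    ring
  set X : ℝ := (2:ℝ)^(((j:ℝ))*(1-β)) with hX
  have hX0 : 0 < X := Real.rpow_pos_of_pos h2 _
  have hj1 : (0:ℝ) < (j:ℝ)+1 := by positivity
  have hJ1 : (0:ℝ) < (J:ℝ)+1 := by positivity
  have hcast : (j:ℝ) ≤ (J:ℝ) := by exact_mod_cast hj
  calc 8 * (2:ℝ)^((j:ℝ))/((j:ℝ)+1) * (2:ℝ)^(((j:ℝ))*(-β))
      = 8 * X / ((j:ℝ)+1) := by rw [← e6]; ring
    _ ≤ 8 * ((((J-j:ℕ):ℝ)+1) * X) / ((J:ℝ)+1) := by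
        rw [div_le_div_iff₀ hj1 hJ1]
        have key : (J:ℝ)+1 ≤ (((J-j:ℕ):ℝ)+1) * ((j:ℝ)+1) := by
          rw [hm]
          nlinarith [mul_nonneg (sub_nonneg.2 hcast) (Nat.cast_nonneg j : (0:ℝ) ≤ (j:ℝ))]
        nlinarith [mul_le_mul_of_nonneg_left key (by positivity : (0:ℝ) ≤ 8*X)]
    _ = (8 * (((J-j:ℕ):ℝ)+1) * (2:ℝ)^((β-1)*((J-j:ℕ):ℝ))) * ((2:ℝ)^(((J:ℝ))*(1-β)) / ((J:ℝ)+1)) := by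
        rw [← e5]
        ring

lemma log2_pos : (0:ℝ) < Real.log 2 := Real.log_pos (by norm_num)

lemma Jfacts {T : ℝ} (hT : 2 ≤ T) :
    ((2:ℝ))^(Nat.log 2 ⌊T⌋₊) ≤ T ∧ T < (2:ℝ)^(Nat.log 2 ⌊T⌋₊ + 1) := by
  have hT0 : (0:ℝ) < T := by linarith
  have hfl : 2 ≤ ⌊T⌋₊ := Nat.le_floor (by exact_mod_cast hT)
  constructor
  · have h := Nat.pow_log_le_self 2 (show ⌊T⌋₊ ≠ 0 by omega)
    calc ((2:ℝ))^(Nat.log 2 ⌊T⌋₊) = ((2^(Nat.log 2 ⌊T⌋₊) : ℕ) : ℝ) := by push_cast; ring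
      _ ≤ (⌊T⌋₊ : ℝ) := by exact_mod_cast h
      _ ≤ T := Nat.floor_le hT0.le
  · have h := Nat.lt_pow_succ_log_self (b := 2) (by norm_num) ⌊T⌋₊
    have h2 : ⌊T⌋₊ + 1 ≤ 2^(Nat.log 2 ⌊T⌋₊ + 1) := h
    calc T < (⌊T⌋₊:ℝ) + 1 := Nat.lt_floor_add_one T
      _ ≤ ((2^(Nat.log 2 ⌊T⌋₊ + 1) : ℕ):ℝ) := by exact_mod_cast h2
      _ = (2:ℝ)^(Nat.log 2 ⌊T⌋₊ + 1) := by push_cast; ring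

lemma cheb_small {β : ℝ} (hβ0 : 0 < β) (hβ1 : β < 1) :
    ∃ C : ℝ, 0 < C ∧ ∀ T : ℝ, 2 ≤ T →
      (∑' p : Nat.Primes, (if ((p:ℕ):ℝ) ≤ T then ((p:ℕ):ℝ)^(-β) else 0)) ≤
        C * T^((1:ℝ)-β) / Real.log T := by
  have h2 : (0:ℝ) < 2 := by norm_num
  set q : ℝ := (2:ℝ)^(β-1) with hq
  have hq0 : 0 < q := Real.rpow_pos_of_pos h2 _
  have hq1 : q < 1 := Real.rpow_lt_one_of_one_lt_of_neg (by norm_num) (by linarith)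
  have hsumq : Summable (fun m : ℕ => ((m:ℝ)+1)*q^m) := summable_lin_geo hq0.le hq1
  set Cq : ℝ := ∑' m : ℕ, ((m:ℝ)+1)*q^m with hCq
  have hCq0 : 0 < Cq := by
    have h := Summable.le_tsum hsumq 0 (fun j _ => by positivity)
    simp only [Nat.cast_zero, zero_add, pow_zero, one_mul] at h
    linarith
  have hC0 : 0 < 8 * Cq * Real.log 2 := by
    have := log2_pos
    positivity
  refine ⟨8 * Cq * Real.log 2, hC0, fun T hT => ?_⟩
  have hT0 : (0:ℝ) < T := by linarith
  have hlogT : 0 < Real.log T := Real.log_pos (by linarith)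
  set J : ℕ := Nat.log 2 ⌊T⌋₊ with hJ
  obtain ⟨h2JT, hTJ⟩ := Jfacts hT
  have hRHS0 : 0 ≤ 8 * Cq * Real.log 2 * T^((1:ℝ)-β) / Real.log T := by
    have := log2_pos
    have : (0:ℝ) ≤ T^((1:ℝ)-β) := Real.rpow_nonneg hT0.le _
    positivity
  refine tsum_le_of_sum_le' hRHS0 (fun s => ?_)
  -- the weight function
  set w : ℕ → ℝ := fun n => if ((n:ℝ) ≤ T ∧ n.Prime) then (n:ℝ)^(-β) else 0 with hw
  have hw0 : ∀ n, 0 ≤ w n := by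
    intro n
    rw [hw]
    dsimp only
    split
    · exact Real.rpow_nonneg (Nat.cast_nonneg n) _
    · exact le_refl 0
  have hwP : ∀ n, w n ≠ 0 → n.Prime := by
    intro n hn
    rw [hw] at hn
    dsimp only at hn
    split_ifs at hn with h
    · exact h.2
    · exact absurd rfl hn
  have hwle : ∀ n, w n ≤ (n:ℝ)^(-β) := by
    intro n
    rw [hw]
    dsimp only
    split_ifs
    · exact le_refl _
    · exact Real.rpow_nonneg (Nat.cast_nonneg n) _
  have heq : (∑ p ∈ s, if ((p:ℕ):ℝ) ≤ T then ((p:ℕ):ℝ)^(-β) else 0) = ∑ p ∈ s, w (p:ℕ) := by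
    refine Finset.sum_congr rfl (fun p _ => ?_)
    rw [hw]
    dsimp only
    exact (if_congr (and_iff_left p.2) rfl rfl).symm
  rw [heq]
  have hstep1 := primes_partial_sum_le hw0 (Nat.zero_le (J+1)) s (fun p _ hwn => by
    rw [hw] at hwn
    dsimp only at hwn
    split_ifs at hwn with h
    · refine ⟨by simpa using h.2.two_le.trans' (by norm_num), ?_⟩
      have : ((p:ℕ):ℝ) < ((2^(J+1) : ℕ):ℝ) := by
        push_cast
        exact lt_of_le_of_lt h.1 hTJ
      exact_mod_cast this
    · exact absurd rfl hwn)
  have hstep2 : (∑ j ∈ Finset.Ico 0 (J+1), (∑ n ∈ Finset.Ico (2^j) (2^(j+1)), w n)) ≤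
      ∑ j ∈ Finset.Ico 0 (J+1), (2:ℝ)^(j+3)/((j:ℝ)+1) * ((2:ℝ)^j)^(-β) := by
    refine Finset.sum_le_sum (fun j _ => ?_)
    have := block_sum_le hβ0.le w hw0 hwP hwle j
    calc (∑ n ∈ Finset.Ico (2^j) (2^(j+1)), w n) ≤ (2^(j+3)/(j+1)) * ((2:ℝ)^j)^(-β) := this
      _ = (2:ℝ)^(j+3)/((j:ℝ)+1) * ((2:ℝ)^j)^(-β) := by norm_num
  set D : ℝ := ((2:ℝ)^J)^((1:ℝ)-β) / ((J:ℝ)+1) with hD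
  have hstep3 : (∑ j ∈ Finset.Ico 0 (J+1), (2:ℝ)^(j+3)/((j:ℝ)+1) * ((2:ℝ)^j)^(-β)) ≤
      ∑ j ∈ Finset.Ico 0 (J+1), (8 * (((J-j:ℕ):ℝ)+1) * q^(J-j)) * D := by
    refine Finset.sum_le_sum (fun j hj => ?_)
    have hjJ : j ≤ J := by
      have := (Finset.mem_Ico.1 hj).2
      omega
    exact term_le_A hβ0 hβ1 hjJ
  have hstep4 : (∑ j ∈ Finset.Ico 0 (J+1), (8 * (((J-j:ℕ):ℝ)+1) * q^(J-j)) * D) ≤ 8 * Cq * D := by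
    have hD0 : 0 ≤ D := by
      rw [hD]
      positivity
    rw [← Finset.sum_mul]
    refine mul_le_mul_of_nonneg_right ?_ hD0
    have hrefl := Finset.sum_range_reflect (fun m => ((m:ℝ)+1)*q^m) (J+1)
    simp only [Nat.add_sub_cancel] at hrefl
    have : (∑ j ∈ Finset.Ico 0 (J+1), 8 * (((J-j:ℕ):ℝ)+1) * q^(J-j)) =
        8 * ∑ j ∈ Finset.range (J+1), (((J-j:ℕ):ℝ)+1) * q^(J-j) := by
      rw [← Finset.range_eq_Ico, Finset.mul_sum]
      exact Finset.sum_congr rfl (fun j _ => by ring)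
    rw [this, hrefl]
    have hle : (∑ j ∈ Finset.range (J+1), (((j:ℕ):ℝ)+1) * q^j) ≤ Cq :=
      Summable.sum_le_tsum _ (fun m _ => by positivity) hsumq
    nlinarith [hle]
  -- final numeric comparison
  have hJ1 : (0:ℝ) < (J:ℝ)+1 := by positivity
  have hY0 : (0:ℝ) ≤ T^((1:ℝ)-β) := Real.rpow_nonneg hT0.le _
  have hXY : ((2:ℝ)^J)^((1:ℝ)-β) ≤ T^((1:ℝ)-β) :=
    Real.rpow_le_rpow (by positivity) h2JT (by linarith)
  have hlogTle : Real.log T ≤ ((J:ℝ)+1) * Real.log 2 := by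
    have h := Real.log_lt_log hT0 hTJ
    rw [Real.log_pow] at h
    push_cast at h
    linarith
  have hfinal : 8 * Cq * D ≤ 8 * Cq * Real.log 2 * T^((1:ℝ)-β) / Real.log T := by
    rw [hD]
    rw [show 8 * Cq * (((2:ℝ)^J)^((1:ℝ)-β) / ((J:ℝ)+1)) = (8 * Cq * ((2:ℝ)^J)^((1:ℝ)-β))/((J:ℝ)+1) by ring]
    rw [div_le_div_iff₀ hJ1 hlogT]
    have h1 : ((2:ℝ)^J)^((1:ℝ)-β) * Real.log T ≤ T^((1:ℝ)-β) * (((J:ℝ)+1) * Real.log 2) :=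
      mul_le_mul hXY hlogTle hlogT.le hY0
    nlinarith [mul_le_mul_of_nonneg_left h1 (by positivity : (0:ℝ) ≤ 8*Cq)]
  calc (∑ p ∈ s, w (p:ℕ)) ≤ _ := hstep1
    _ ≤ _ := hstep2
    _ ≤ _ := hstep3
    _ ≤ 8 * Cq * D := hstep4
    _ ≤ _ := hfinal

lemma term_le_B {β : ℝ} (hβ : 1 < β) {j J : ℕ} (hj : J ≤ j) :
    (2:ℝ)^(j+3)/((j:ℝ)+1) * ((2:ℝ)^j)^(-β) ≤
      (8/((J:ℝ)+1) * ((2:ℝ)^J)^((1:ℝ)-β)) * ((2:ℝ)^((1:ℝ)-β))^(j-J) := by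
  have h2 : (0:ℝ) < 2 := by norm_num
  have hm : ((j-J:ℕ):ℝ) = (j:ℝ) - (J:ℝ) := by rw [Nat.cast_sub hj]
  have e1 : ((2:ℝ)^j)^(-β) = (2:ℝ)^(((j:ℝ))*(-β)) := by
    rw [← Real.rpow_natCast 2 j, ← Real.rpow_mul (by norm_num)]
  have e2 : ((2:ℝ)^J)^((1:ℝ)-β) = (2:ℝ)^(((J:ℝ))*(1-β)) := by
    rw [← Real.rpow_natCast 2 J, ← Real.rpow_mul (by norm_num)]
  have e3 : ((2:ℝ)^((1:ℝ)-β))^(j-J) = (2:ℝ)^((1-β)*((j-J:ℕ):ℝ)) := by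
    rw [Real.rpow_mul (by norm_num), Real.rpow_natCast]
  have e4 : (2:ℝ)^(j+3) = 8 * (2:ℝ)^((j:ℝ)) := by
    rw [Real.rpow_natCast, pow_add]
    norm_num
    ring
  rw [e1, e2, e3, e4]
  have e5 : (2:ℝ)^(((J:ℝ))*(1-β)) * (2:ℝ)^((1-β)*((j-J:ℕ):ℝ)) = (2:ℝ)^(((j:ℝ))*(1-β)) := by
    rw [← Real.rpow_add h2]
    congr 1
    rw [hm]
    ring
  have e6 : (2:ℝ)^((j:ℝ)) * (2:ℝ)^(((j:ℝ))*(-β)) = (2:ℝ)^(((j:ℝ))*(1-β)) := by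
    rw [← Real.rpow_add h2]
    congr 1
    ring
  have hX0 : (0:ℝ) < (2:ℝ)^(((j:ℝ))*(1-β)) := Real.rpow_pos_of_pos h2 _
  have hj1 : (0:ℝ) < (j:ℝ)+1 := by positivity
  have hJ1 : (0:ℝ) < (J:ℝ)+1 := by positivity
  have hcast : (J:ℝ) ≤ (j:ℝ) := by exact_mod_cast hj
  calc 8 * (2:ℝ)^((j:ℝ))/((j:ℝ)+1) * (2:ℝ)^(((j:ℝ))*(-β))
      = 8 * (2:ℝ)^(((j:ℝ))*(1-β)) / ((j:ℝ)+1) := by rw [← e6]; ring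
    _ ≤ 8 * (2:ℝ)^(((j:ℝ))*(1-β)) / ((J:ℝ)+1) := by
        apply div_le_div_of_nonneg_left (by positivity) hJ1
        linarith
    _ = (8/((J:ℝ)+1) * (2:ℝ)^(((J:ℝ))*(1-β))) * (2:ℝ)^((1-β)*((j-J:ℕ):ℝ)) := by
        rw [mul_assoc, e5]
        ring

lemma cheb_large {β : ℝ} (hβ : 1 < β) :
    ∃ C : ℝ, 0 < C ∧ ∀ T : ℝ, 2 ≤ T →
      (∑' p : Nat.Primes, (if T < ((p:ℕ):ℝ) then ((p:ℕ):ℝ)^(-β) else 0)) ≤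
        C * T^((1:ℝ)-β) / Real.log T := by
  have h2 : (0:ℝ) < 2 := by norm_num
  set q2 : ℝ := (2:ℝ)^((1:ℝ)-β) with hq2
  have hq20 : 0 < q2 := Real.rpow_pos_of_pos h2 _
  have hq21 : q2 < 1 := Real.rpow_lt_one_of_one_lt_of_neg (by norm_num) (by linarith)
  have hgeo : (0:ℝ) < (1 - q2)⁻¹ := by
    rw [inv_pos]
    linarith
  have hpow : (0:ℝ) < (2:ℝ)^(β-(1:ℝ)) := Real.rpow_pos_of_pos h2 _
  have hC0 : (0:ℝ) < 8 * (1 - q2)⁻¹ * (2:ℝ)^(β-(1:ℝ)) * Real.log 2 := by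
    have := log2_pos
    positivity
  refine ⟨8 * (1 - q2)⁻¹ * (2:ℝ)^(β-(1:ℝ)) * Real.log 2, hC0, fun T hT => ?_⟩
  have hT0 : (0:ℝ) < T := by linarith
  have hlogT : 0 < Real.log T := Real.log_pos (by linarith)
  set J : ℕ := Nat.log 2 ⌊T⌋₊ with hJ
  obtain ⟨h2JT, hTJ⟩ := Jfacts hT
  have hY0 : (0:ℝ) ≤ T^((1:ℝ)-β) := Real.rpow_nonneg hT0.le _
  have hRHS0 : 0 ≤ 8 * (1 - q2)⁻¹ * (2:ℝ)^(β-(1:ℝ)) * Real.log 2 * T^((1:ℝ)-β) / Real.log T := by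
    have := log2_pos
    positivity
  refine tsum_le_of_sum_le' hRHS0 (fun s => ?_)
  set w : ℕ → ℝ := fun n => if (T < (n:ℝ) ∧ n.Prime) then (n:ℝ)^(-β) else 0 with hw
  have hw0 : ∀ n, 0 ≤ w n := by
    intro n
    rw [hw]
    dsimp only
    split
    · exact Real.rpow_nonneg (Nat.cast_nonneg n) _
    · exact le_refl 0
  have hwP : ∀ n, w n ≠ 0 → n.Prime := by
    intro n hn
    rw [hw] at hn
    dsimp only at hn
    split_ifs at hn with h
    · exact h.2
    · exact absurd rfl hn
  have hwle : ∀ n, w n ≤ (n:ℝ)^(-β) := by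
    intro n
    rw [hw]
    dsimp only
    split_ifs
    · exact le_refl _
    · exact Real.rpow_nonneg (Nat.cast_nonneg n) _
  have heq : (∑ p ∈ s, if T < ((p:ℕ):ℝ) then ((p:ℕ):ℝ)^(-β) else 0) = ∑ p ∈ s, w (p:ℕ) := by
    refine Finset.sum_congr rfl (fun p _ => ?_)
    rw [hw]
    dsimp only
    exact (if_congr (and_iff_left p.2) rfl rfl).symm
  rw [heq]
  set K : ℕ := s.sup (fun p : Nat.Primes => (p:ℕ)) with hK
  set b : ℕ := J + 1 + K with hb
  have hab : J ≤ b := by omega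
  have hstep1 := primes_partial_sum_le hw0 hab s (fun p hp hwn => by
    rw [hw] at hwn
    dsimp only at hwn
    split_ifs at hwn with h
    · constructor
      · have : ((2^J : ℕ):ℝ) < ((p:ℕ):ℝ) := by
          push_cast
          exact lt_of_le_of_lt h2JT h.1
        have := Nat.cast_lt.1 this
        omega
      · have h1 : (p:ℕ) ≤ K := Finset.le_sup (f := fun p : Nat.Primes => (p:ℕ)) hp
        have h2 : K < 2^K := Nat.lt_two_pow_self
        have h3 : (2:ℕ)^K ≤ 2^b := Nat.pow_le_pow_right (by norm_num) (by omega)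
        omega
    · exact absurd rfl hwn)
  have hstep2 : (∑ j ∈ Finset.Ico J b, (∑ n ∈ Finset.Ico (2^j) (2^(j+1)), w n)) ≤
      ∑ j ∈ Finset.Ico J b, (2:ℝ)^(j+3)/((j:ℝ)+1) * ((2:ℝ)^j)^(-β) := by
    refine Finset.sum_le_sum (fun j _ => ?_)
    have := block_sum_le (by linarith : (0:ℝ) ≤ β) w hw0 hwP hwle j
    calc (∑ n ∈ Finset.Ico (2^j) (2^(j+1)), w n) ≤ (2^(j+3)/(j+1)) * ((2:ℝ)^j)^(-β) := this
      _ = (2:ℝ)^(j+3)/((j:ℝ)+1) * ((2:ℝ)^j)^(-β) := by norm_num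
  set D : ℝ := 8/((J:ℝ)+1) * ((2:ℝ)^J)^((1:ℝ)-β) with hD
  have hD0 : 0 ≤ D := by
    rw [hD]
    positivity
  have hstep3 : (∑ j ∈ Finset.Ico J b, (2:ℝ)^(j+3)/((j:ℝ)+1) * ((2:ℝ)^j)^(-β)) ≤
      ∑ j ∈ Finset.Ico J b, D * q2^(j-J) := by
    refine Finset.sum_le_sum (fun j hj => ?_)
    exact term_le_B hβ ((Finset.mem_Ico.1 hj).1)
  have hstep4 : (∑ j ∈ Finset.Ico J b, D * q2^(j-J)) ≤ D * (1-q2)⁻¹ := by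
    rw [← Finset.mul_sum]
    refine mul_le_mul_of_nonneg_left ?_ hD0
    have hre : (∑ j ∈ Finset.Ico J b, q2^(j-J)) = ∑ i ∈ Finset.range (b-J), q2^i := by
      rw [Finset.sum_Ico_eq_sum_range]
      exact Finset.sum_congr rfl (fun i _ => by rw [Nat.add_sub_cancel_left])
    rw [hre]
    have := Summable.sum_le_tsum (Finset.range (b-J)) (fun i _ => by positivity)
      (summable_geometric_of_lt_one hq20.le hq21)
    rwa [tsum_geometric_of_lt_one hq20.le hq21] at this
  -- final numeric part
  have hJ1 : (0:ℝ) < (J:ℝ)+1 := by positivity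
  have hXT : ((2:ℝ)^J)^((1:ℝ)-β) ≤ T^((1:ℝ)-β) * (2:ℝ)^(β-(1:ℝ)) := by
    have hT2 : (0:ℝ) < T/2 := by linarith
    have hT2J : T/2 ≤ (2:ℝ)^J := by
      have : (2:ℝ)^(J+1) = 2 * (2:ℝ)^J := by ring
      nlinarith [hTJ]
    have h1 : ((2:ℝ)^J)^((1:ℝ)-β) ≤ (T/2)^((1:ℝ)-β) :=
      Real.rpow_le_rpow_of_nonpos hT2 hT2J (by linarith)
    have h2' : (T/2)^((1:ℝ)-β) = T^((1:ℝ)-β) * (2:ℝ)^(β-(1:ℝ)) := by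
      rw [Real.div_rpow hT0.le (by norm_num : (0:ℝ) ≤ 2), div_eq_mul_inv,
        ← Real.rpow_neg (by norm_num : (0:ℝ) ≤ 2)]
      congr 1
      ring
    linarith [h1, h2'.le, h2'.ge]
  have hlogTle : Real.log T ≤ ((J:ℝ)+1) * Real.log 2 := by
    have h := Real.log_lt_log hT0 hTJ
    rw [Real.log_pow] at h
    push_cast at h
    linarith
  have hfinal : D * (1-q2)⁻¹ ≤
      8 * (1 - q2)⁻¹ * (2:ℝ)^(β-(1:ℝ)) * Real.log 2 * T^((1:ℝ)-β) / Real.log T := by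
    rw [hD]
    rw [show 8/((J:ℝ)+1) * ((2:ℝ)^J)^((1:ℝ)-β) * (1-q2)⁻¹ =
      (8 * (1-q2)⁻¹ * ((2:ℝ)^J)^((1:ℝ)-β))/((J:ℝ)+1) by ring]
    rw [div_le_div_iff₀ hJ1 hlogT]
    have h1 : ((2:ℝ)^J)^((1:ℝ)-β) * Real.log T ≤
        (T^((1:ℝ)-β) * (2:ℝ)^(β-(1:ℝ))) * (((J:ℝ)+1) * Real.log 2) :=
      mul_le_mul hXT hlogTle hlogT.le (by positivity)
    nlinarith [mul_le_mul_of_nonneg_left h1 (by positivity : (0:ℝ) ≤ 8*(1-q2)⁻¹)]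
  calc (∑ p ∈ s, w (p:ℕ)) ≤ _ := hstep1
    _ ≤ _ := hstep2
    _ ≤ _ := hstep3
    _ ≤ D * (1-q2)⁻¹ := hstep4
    _ ≤ _ := hfinal

lemma rpow_le_34 {x : ℝ} (hx : 2 ≤ x) {α : ℝ} (hα : 1/2 ≤ α) (hα0 : 0 < α) :
    x^(-α) ≤ 3/4 := by
  have hx0 : (0:ℝ) < x := by linarith
  have h1 : x^(-α) ≤ (2:ℝ)^(-α) :=
    Real.rpow_le_rpow_of_nonpos (by norm_num) hx (by linarith)
  have h2 : (2:ℝ)^(-α) ≤ (2:ℝ)^(-(1/2 : ℝ)) :=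
    Real.rpow_le_rpow_of_exponent_le (by norm_num) (by linarith)
  have h3 : (2:ℝ)^(-(1/2:ℝ)) ≤ 3/4 := by
    have hs : ((2:ℝ)^((1/2):ℝ))^2 = 2 := by
      rw [← Real.rpow_natCast ((2:ℝ)^((1/2):ℝ)) 2, ← Real.rpow_mul (by norm_num)]
      norm_num
    have hpos : (0:ℝ) < (2:ℝ)^((1/2):ℝ) := Real.rpow_pos_of_pos (by norm_num) _
    have h43 : (4/3 : ℝ) ≤ (2:ℝ)^((1/2):ℝ) := by nlinarith
    rw [Real.rpow_neg (by norm_num)]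
    rw [inv_le_comm₀ hpos (by norm_num)]
    linarith
  linarith

theorem log_moment_bound_alpha_lt_one (α : ℝ) (hα₁ : 1 / 2 < α) (hα₂ : α < 1) :
    ∃ C : ℝ, 0 < C ∧ ∀ ℓ : ℕ, 3 ≤ ℓ →
      Summable (fun p : Nat.Primes => Real.log (momentFactor ℓ (p : ℕ) α)) ∧
      (∑' p : Nat.Primes, Real.log (momentFactor ℓ (p : ℕ) α)) ≤
        C * (ℓ : ℝ) ^ (1 / α) / Real.log ℓ := by
  have hα0 : (0:ℝ) < α := by linarith
  obtain ⟨CA, hCA0, hA⟩ := cheb_small hα0 hα₂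
  obtain ⟨CB, hCB0, hB⟩ := cheb_large (show (1:ℝ) < 2*α by linarith)
  refine ⟨16*CA + 12*CB, by positivity, fun ℓ hℓ => ?_⟩
  have hℓ3 : (3:ℝ) ≤ (ℓ:ℝ) := by exact_mod_cast hℓ
  have hℓ0 : (0:ℝ) < (ℓ:ℝ) := by linarith
  set W : ℝ := 2*(ℓ:ℝ) with hW
  have hW0 : (0:ℝ) < W := by rw [hW]; linarith
  have hW1 : (1:ℝ) ≤ W := by rw [hW]; linarith
  set T : ℝ := W^((1:ℝ)/α) with hT
  have hT0 : (0:ℝ) < T := Real.rpow_pos_of_pos hW0 _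
  have h1α : (1:ℝ) ≤ 1/α := by
    rw [le_div_iff₀ hα0]
    linarith
  have h1α2 : (1:ℝ)/α ≤ 2 := by
    rw [div_le_iff₀ hα0]
    linarith
  have hT2 : (2:ℝ) ≤ T := by
    have : W^(1:ℝ) ≤ W^((1:ℝ)/α) := Real.rpow_le_rpow_of_exponent_le hW1 h1α
    rw [Real.rpow_one] at this
    rw [hT]
    linarith [hW1, this, hℓ3]
  have hTα : T^α = W := by
    rw [hT, ← Real.rpow_mul hW0.le]
    rw [show (1:ℝ)/α * α = 1 by field_simp]
    exact Real.rpow_one W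
  -- per-prime facts
  have hpfacts : ∀ p : Nat.Primes, (0:ℝ) < ((p:ℕ):ℝ) ∧ (1:ℝ) < ((p:ℕ):ℝ) := by
    intro p
    have := p.2.two_le
    have h2 : (2:ℝ) ≤ ((p:ℕ):ℝ) := by exact_mod_cast this
    constructor <;> linarith
  set r : Nat.Primes → ℝ := fun p => ((p:ℕ):ℝ)^(-α) with hr
  have hr0 : ∀ p, 0 < r p := fun p => Real.rpow_pos_of_pos (hpfacts p).1 _
  have hr1 : ∀ p, r p < 1 := fun p =>
    Real.rpow_lt_one_of_one_lt_of_neg (hpfacts p).2 (by linarith)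
  have hr34 : ∀ p, r p ≤ 3/4 := by
    intro p
    have h2 : (2:ℝ) ≤ ((p:ℕ):ℝ) := by exact_mod_cast p.2.two_le
    exact rpow_le_34 h2 hα₁.le hα0
  have hr2 : ∀ p, (r p)^2 = ((p:ℕ):ℝ)^(-(2*α)) := by
    intro p
    rw [hr]
    dsimp only
    rw [pow_two, ← Real.rpow_add (hpfacts p).1]
    congr 1
    ring
  -- rewrite momentFactor
  have hMeq : ∀ p : Nat.Primes, momentFactor ℓ (p:ℕ) α = (1/(2*π)) * Iint ℓ (r p) :=
    fun p => mF_eq ℓ (p:ℕ) α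
  -- bounds
  have hlow : ∀ p : Nat.Primes, -((ℓ:ℝ)*(r p)^2) ≤ Real.log (momentFactor ℓ (p:ℕ) α) := by
    intro p
    rw [hMeq p]
    exact log_mF_lower (hr0 p).le (hr1 p) ℓ
  have hup_small : ∀ p : Nat.Primes, Real.log (momentFactor ℓ (p:ℕ) α) ≤ 8*(ℓ:ℝ)*(r p) := by
    intro p
    rw [hMeq p]
    exact log_mF_small (hr0 p).le (hr34 p) ℓ
  have hup_large : ∀ p : Nat.Primes, T < ((p:ℕ):ℝ) →
      Real.log (momentFactor ℓ (p:ℕ) α) ≤ 12*(ℓ:ℝ)^2*(r p)^2 := by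
    intro p hp
    have hα' : T^α < ((p:ℕ):ℝ)^α := Real.rpow_lt_rpow hT0.le hp hα0
    rw [hTα] at hα'
    have hpα0 : (0:ℝ) < ((p:ℕ):ℝ)^α := Real.rpow_pos_of_pos (hpfacts p).1 _
    have hrinv : r p = (((p:ℕ):ℝ)^α)⁻¹ := by
      rw [hr]
      dsimp only
      rw [← Real.rpow_neg (hpfacts p).1.le]
    have hsm : 2*(ℓ:ℝ)*(r p) ≤ 1 := by
      rw [hrinv]
      rw [mul_inv_le_iff₀ hpα0]
      rw [one_mul]
      linarith
    rw [hMeq p]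
    exact log_mF_large hℓ (hr0 p).le hsm
  -- the comparison functions
  set U1 : Nat.Primes → ℝ := fun p => if ((p:ℕ):ℝ) ≤ T then ((p:ℕ):ℝ)^(-α) else 0 with hU1
  set U2 : Nat.Primes → ℝ := fun p => if T < ((p:ℕ):ℝ) then ((p:ℕ):ℝ)^(-(2*α)) else 0 with hU2
  have hG : Summable (fun p : Nat.Primes => ((p:ℕ):ℝ)^(-(2*α))) :=
    Nat.Primes.summable_rpow.2 (by linarith)
  -- p ≤ T case: p^α ≤ 2ℓ hence p^(-α) ≤ 2ℓ p^(-2α)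
  have hsmall_dom : ∀ p : Nat.Primes, ((p:ℕ):ℝ) ≤ T →
      ((p:ℕ):ℝ)^(-α) ≤ 2*(ℓ:ℝ)*((p:ℕ):ℝ)^(-(2*α)) := by
    intro p hp
    have h1 : ((p:ℕ):ℝ)^α ≤ W := by
      rw [← hTα]
      exact Real.rpow_le_rpow (hpfacts p).1.le hp hα0.le
    have h2 : ((p:ℕ):ℝ)^(-α) = ((p:ℕ):ℝ)^α * ((p:ℕ):ℝ)^(-(2*α)) := by
      rw [← Real.rpow_add (hpfacts p).1]
      congr 1
      ring
    rw [h2, hW] at *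
    have h3 : (0:ℝ) ≤ ((p:ℕ):ℝ)^(-(2*α)) := Real.rpow_nonneg (hpfacts p).1.le _
    exact mul_le_mul_of_nonneg_right h1 h3
  have habs : ∀ p : Nat.Primes, |Real.log (momentFactor ℓ (p:ℕ) α)| ≤
      16*(ℓ:ℝ)^2*((p:ℕ):ℝ)^(-(2*α)) := by
    intro p
    rw [abs_le]
    have hrp2 := hr2 p
    constructor
    · have h1 := hlow p
      have hcoef : (ℓ:ℝ) ≤ 16*(ℓ:ℝ)^2 := by nlinarith
      have h2 : ((ℓ:ℝ))*(r p)^2 ≤ 16*(ℓ:ℝ)^2*(r p)^2 :=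
        mul_le_mul_of_nonneg_right hcoef (sq_nonneg (r p))
      rw [hrp2] at h2 h1
      linarith
    · rcases le_or_gt ((p:ℕ):ℝ) T with hc | hc
      · have h1 := hup_small p
        have h2 := hsmall_dom p hc
        have h3 : 8*(ℓ:ℝ)*(r p) ≤ 8*(ℓ:ℝ)*(2*(ℓ:ℝ)*((p:ℕ):ℝ)^(-(2*α))) := by
          refine mul_le_mul_of_nonneg_left ?_ (by positivity)
          rw [hr]
          exact h2
        calc Real.log (momentFactor ℓ (p:ℕ) α) ≤ 8*(ℓ:ℝ)*(r p) := h1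
          _ ≤ 8*(ℓ:ℝ)*(2*(ℓ:ℝ)*((p:ℕ):ℝ)^(-(2*α))) := h3
          _ = 16*(ℓ:ℝ)^2*((p:ℕ):ℝ)^(-(2*α)) := by ring
      · have h1 := hup_large p hc
        rw [hrp2] at h1
        have h3 : (0:ℝ) ≤ ((p:ℕ):ℝ)^(-(2*α)) := Real.rpow_nonneg (hpfacts p).1.le _
        nlinarith [sq_nonneg (ℓ:ℝ)]
  have hsummable : Summable (fun p : Nat.Primes => Real.log (momentFactor ℓ (p:ℕ) α)) := by
    refine Summable.of_norm_bounded (hG.mul_left (16*(ℓ:ℝ)^2)) (fun p => ?_)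
    rw [Real.norm_eq_abs]
    exact habs p
  refine ⟨hsummable, ?_⟩
  -- summability of U1, U2
  have hU1sum : Summable U1 := by
    refine Summable.of_nonneg_of_le (fun p => ?_) (fun p => ?_) (hG.mul_left (2*(ℓ:ℝ)))
    · rw [hU1]
      dsimp only
      split
      · exact Real.rpow_nonneg (hpfacts p).1.le _
      · exact le_refl 0
    · rw [hU1]
      dsimp only
      split_ifs with h
      · exact hsmall_dom p h
      · positivity
  have hU2sum : Summable U2 := by
    refine Summable.of_nonneg_of_le (fun p => ?_) (fun p => ?_) hG
    · rw [hU2]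
      dsimp only
      split
      · exact Real.rpow_nonneg (hpfacts p).1.le _
      · exact le_refl 0
    · rw [hU2]
      dsimp only
      split_ifs with h
      · exact le_refl _
      · exact Real.rpow_nonneg (hpfacts p).1.le _
  -- pointwise bound by U
  have hptwise : ∀ p : Nat.Primes, Real.log (momentFactor ℓ (p:ℕ) α) ≤
      8*(ℓ:ℝ)*U1 p + 12*(ℓ:ℝ)^2*U2 p := by
    intro p
    rw [hU1, hU2]
    dsimp only
    rcases le_or_gt ((p:ℕ):ℝ) T with hc | hc
    · rw [if_pos hc, if_neg (not_lt.2 hc)]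
      have := hup_small p
      rw [hr] at this
      dsimp only at this
      linarith
    · rw [if_neg (not_le.2 hc), if_pos hc]
      have := hup_large p hc
      rw [hr2 p] at this
      linarith
  have hUsum : Summable (fun p => 8*(ℓ:ℝ)*U1 p + 12*(ℓ:ℝ)^2*U2 p) :=
    (hU1sum.mul_left _).add (hU2sum.mul_left _)
  have hsum1 : (∑' p : Nat.Primes, Real.log (momentFactor ℓ (p:ℕ) α)) ≤
      ∑' p : Nat.Primes, (8*(ℓ:ℝ)*U1 p + 12*(ℓ:ℝ)^2*U2 p) :=
    Summable.tsum_le_tsum hptwise hsummable hUsum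
  have hsum2 : (∑' p : Nat.Primes, (8*(ℓ:ℝ)*U1 p + 12*(ℓ:ℝ)^2*U2 p)) =
      8*(ℓ:ℝ)*(∑' p, U1 p) + 12*(ℓ:ℝ)^2*(∑' p, U2 p) := by
    rw [Summable.tsum_add (hU1sum.mul_left _) (hU2sum.mul_left _), tsum_mul_left, tsum_mul_left]
  have hS1 := hA T hT2
  have hS2 := hB T hT2
  -- numeric endgame
  have hlogT : Real.log T = (1/α) * Real.log W := Real.log_rpow hW0 _
  have hlogℓ : 0 < Real.log ℓ := Real.log_pos (by linarith)
  have hlogWℓ : Real.log (ℓ:ℝ) ≤ Real.log W := Real.log_le_log hℓ0 (by rw [hW]; linarith)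
  have hlogTℓ : Real.log (ℓ:ℝ) ≤ Real.log T := by
    rw [hlogT]
    calc Real.log (ℓ:ℝ) = 1 * Real.log (ℓ:ℝ) := (one_mul _).symm
      _ ≤ (1/α) * Real.log W := by
          refine mul_le_mul h1α hlogWℓ hlogℓ.le (by linarith)
  have hlogT0 : 0 < Real.log T := lt_of_lt_of_le hlogℓ hlogTℓ
  have hX4 : W^((1:ℝ)/α) ≤ 4 * (ℓ:ℝ)^((1:ℝ)/α) := by
    have h1 : W^((1:ℝ)/α) = (2:ℝ)^((1:ℝ)/α) * (ℓ:ℝ)^((1:ℝ)/α) := by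
      rw [hW, Real.mul_rpow (by norm_num) hℓ0.le]
    have h2 : (2:ℝ)^((1:ℝ)/α) ≤ (2:ℝ)^(2:ℝ) :=
      Real.rpow_le_rpow_of_exponent_le (by norm_num) h1α2
    have h3 : (2:ℝ)^(2:ℝ) = 4 := by
      rw [show (2:ℝ) = ((2:ℕ):ℝ) by norm_num]
      rw [Real.rpow_natCast]
      norm_num
    have h4 : (0:ℝ) ≤ (ℓ:ℝ)^((1:ℝ)/α) := Real.rpow_nonneg hℓ0.le _
    rw [h1]
    nlinarith [h2, h3.le, h3.ge, h4]
  have hTe1 : (ℓ:ℝ) * T^((1:ℝ)-α) = W^((1:ℝ)/α) / 2 := by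
    have e1 : T^((1:ℝ)-α) = W^((1/α)*(1-α)) := by
      rw [hT, ← Real.rpow_mul hW0.le]
    have e2 : (1/α)*(1-α) = 1/α + (-1) := by field_simp; ring
    rw [e1, e2, Real.rpow_add hW0, Real.rpow_neg_one, hW]
    field_simp
  have hTe2 : (ℓ:ℝ)^2 * T^((1:ℝ)-2*α) = W^((1:ℝ)/α) / 4 := by
    have e1 : T^((1:ℝ)-2*α) = W^((1/α)*(1-2*α)) := by
      rw [hT, ← Real.rpow_mul hW0.le]
    have e2 : (1/α)*(1-2*α) = 1/α + (-2) := by field_simp; ring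
    have e3 : W^(-2:ℝ) = (W^2)⁻¹ := by
      rw [show (-2:ℝ) = -((2:ℕ):ℝ) by norm_num, Real.rpow_neg hW0.le, Real.rpow_natCast]
    rw [e1, e2, Real.rpow_add hW0, e3, hW]
    field_simp
    ring
  -- combine
  have hfin1 : 8*(ℓ:ℝ)*(∑' p, U1 p) ≤ 8*CA*(W^((1:ℝ)/α)/2)/Real.log T := by
    have h := hS1
    have h2 : 8*(ℓ:ℝ)*(∑' p, U1 p) ≤ 8*(ℓ:ℝ)*(CA * T^((1:ℝ)-α) / Real.log T) := by
      refine mul_le_mul_of_nonneg_left ?_ (by positivity)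
      exact h
    calc 8*(ℓ:ℝ)*(∑' p, U1 p) ≤ 8*(ℓ:ℝ)*(CA * T^((1:ℝ)-α) / Real.log T) := h2
      _ = 8*CA*((ℓ:ℝ)*T^((1:ℝ)-α))/Real.log T := by ring
      _ = 8*CA*(W^((1:ℝ)/α)/2)/Real.log T := by rw [hTe1]
  have hfin2 : 12*(ℓ:ℝ)^2*(∑' p, U2 p) ≤ 12*CB*(W^((1:ℝ)/α)/4)/Real.log T := by
    have h2 : 12*(ℓ:ℝ)^2*(∑' p, U2 p) ≤ 12*(ℓ:ℝ)^2*(CB * T^((1:ℝ)-2*α) / Real.log T) := by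
      refine mul_le_mul_of_nonneg_left ?_ (by positivity)
      exact hS2
    calc 12*(ℓ:ℝ)^2*(∑' p, U2 p) ≤ 12*(ℓ:ℝ)^2*(CB * T^((1:ℝ)-2*α) / Real.log T) := h2
      _ = 12*CB*((ℓ:ℝ)^2*T^((1:ℝ)-2*α))/Real.log T := by ring
      _ = 12*CB*(W^((1:ℝ)/α)/4)/Real.log T := by rw [hTe2]
  have hXpos : 0 < W^((1:ℝ)/α) := Real.rpow_pos_of_pos hW0 _
  have hfin3 : (4*CA + 3*CB)*(W^((1:ℝ)/α))/Real.log T ≤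
      (16*CA + 12*CB)*(ℓ:ℝ)^((1:ℝ)/α)/Real.log ℓ := by
    have hnum : (4*CA + 3*CB)*(W^((1:ℝ)/α)) ≤ (4*CA+3*CB)*(4 * (ℓ:ℝ)^((1:ℝ)/α)) :=
      mul_le_mul_of_nonneg_left hX4 (by positivity)
    have := div_le_div₀ (by positivity : (0:ℝ) ≤ (4*CA+3*CB)*(4 * (ℓ:ℝ)^((1:ℝ)/α)))
      hnum hlogℓ hlogTℓ
    calc (4*CA + 3*CB)*(W^((1:ℝ)/α))/Real.log T
        ≤ (4*CA+3*CB)*(4 * (ℓ:ℝ)^((1:ℝ)/α))/Real.log ℓ := this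
      _ = (16*CA + 12*CB)*(ℓ:ℝ)^((1:ℝ)/α)/Real.log ℓ := by ring
  have hone : (1:ℝ)/α = 1/α := rfl
  calc (∑' p : Nat.Primes, Real.log (momentFactor ℓ (p:ℕ) α))
      ≤ ∑' p : Nat.Primes, (8*(ℓ:ℝ)*U1 p + 12*(ℓ:ℝ)^2*U2 p) := hsum1
    _ = 8*(ℓ:ℝ)*(∑' p, U1 p) + 12*(ℓ:ℝ)^2*(∑' p, U2 p) := hsum2
    _ ≤ 8*CA*(W^((1:ℝ)/α)/2)/Real.log T + 12*CB*(W^((1:ℝ)/α)/4)/Real.log T := by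
        linarith [hfin1, hfin2]
    _ = (4*CA + 3*CB)*(W^((1:ℝ)/α))/Real.log T := by ring
    _ ≤ (16*CA + 12*CB)*(ℓ:ℝ)^((1:ℝ)/α)/Real.log ℓ := hfin3
    _ = (16*CA + 12*CB)*(ℓ:ℝ)^(1/α)/Real.log ℓ := by norm_num
end
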